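/- arXiv:math/0609202 — 6 statements merged into one kernel-verified Lean document; each statement's English description precedes it below -/
import Mathlib

section
/- Let φ satisfy the regularity assumptions: φ is C² and strictly positive on [1,∞), eventually strictly decreasing, φ decays faster than any power (ω^l·φ(ω) → 0 as ω → ∞ for every l > 0), and for every μ with 0 < |μ| ≤ 1 there is ω₀(μ) such that the second derivative of φ^μ has no zero on (ω₀(μ),∞). Let ω be a random variable with density φ and β > 0. Then the random variable Y := φ(ω)^{−β} has power-law-like tail with exponent 1/β: lim_{y→∞} ln Pr{Y > y}/ln y = −1/β. Equivalently, Y has asymptotic density ψ(y) = y^{−(1+1/β)+o_y(1)} (Lemma 2 i). -/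
open MeasureTheory Filter ProbabilityTheory

lemma conv_mu (φ : ℝ → ℝ)
    (hφ_pos : ∀ x : ℝ, 1 ≤ x → 0 < φ x)
    (hφ_C2 : ContDiffOn ℝ 2 φ (Set.Ici 1))
    (x₀ : ℝ) (hanti : StrictAntiOn φ (Set.Ici x₀))
    (μ : ℝ) (hμ0 : 0 < μ)
    (ω₀ : ℝ) (hmu : ∀ x : ℝ, ω₀ < x → deriv (deriv (fun t : ℝ => φ t ^ μ)) x ≠ 0) :
    ∃ a : ℝ, 2 ≤ a ∧ x₀ + 1 ≤ a ∧
      StrictMonoOn (deriv (fun t : ℝ => φ t ^ μ)) (Set.Ici a) ∧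
      (∀ x, a ≤ x → deriv (fun t : ℝ => φ t ^ μ) x < 0) ∧
      (∀ x, a ≤ x → HasDerivAt (fun t : ℝ => φ t ^ μ) (deriv (fun t : ℝ => φ t ^ μ) x) x) := by
  set g : ℝ → ℝ := fun t : ℝ => φ t ^ μ with hgdef
  have hgC2 : ContDiffOn ℝ 2 g (Set.Ioi 1) := by
    intro x hx
    have hx1 : (1:ℝ) < x := hx
    have hφx : ContDiffAt ℝ 2 φ x := hφ_C2.contDiffAt (Ici_mem_nhds hx1)
    exact (hφx.rpow_const_of_ne (ne_of_gt (hφ_pos x hx1.le))).contDiffWithinAt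
  have hg1 : ContDiffOn ℝ 1 (deriv g) (Set.Ioi 1) := by
    have := hgC2.deriv_of_isOpen isOpen_Ioi (n := 2) (m := 1) (by norm_num)
    exact this
  have hg2cont : ContinuousOn (deriv (deriv g)) (Set.Ioi 1) := by
    have := hg1.deriv_of_isOpen isOpen_Ioi (n := 1) (m := 0) (by norm_num)
    exact this.continuousOn
  have hg'cont : ContinuousOn (deriv g) (Set.Ioi 1) := hg1.continuousOn
  have hgcont : ContinuousOn g (Set.Ioi 1) := hgC2.continuousOn
  have hgdiff : ∀ x : ℝ, 1 < x → HasDerivAt g (deriv g x) x := by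
    intro x hx
    exact ((hgC2.contDiffAt (isOpen_Ioi.mem_nhds hx)).differentiableAt (by norm_num)).hasDerivAt
  have hgpos : ∀ x : ℝ, 1 ≤ x → 0 < g x := fun x hx => Real.rpow_pos_of_pos (hφ_pos x hx) μ
  set b : ℝ := max (max ω₀ x₀) 2 with hbdef
  have hb2 : (2:ℝ) ≤ b := le_max_right _ _
  have hbω : ω₀ ≤ b := le_trans (le_max_left _ _) (le_max_left _ _)
  have hbx : x₀ ≤ b := le_trans (le_max_right _ _) (le_max_left _ _)
  have hmu' : ∀ x : ℝ, b < x → deriv (deriv g) x ≠ 0 := fun x hx => hmu x (by linarith)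
  have hganti : StrictAntiOn g (Set.Ici b) := by
    intro u hu v hv huv
    have h1 : φ v < φ u := hanti (Set.mem_Ici.mpr (le_trans hbx hu)) (Set.mem_Ici.mpr (le_trans hbx hv)) huv
    exact Real.rpow_lt_rpow (le_of_lt (hφ_pos v (le_trans (by linarith) hv))) h1 hμ0
  -- sign dichotomy
  have hsign : (∀ x, b < x → 0 < deriv (deriv g) x) ∨ (∀ x, b < x → deriv (deriv g) x < 0) := by
    set h := deriv (deriv g) with hh
    by_contra hcon
    push_neg at hcon
    obtain ⟨⟨p, hp, hp'⟩, ⟨q, hq, hq'⟩⟩ := hcon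
    have hpneg : h p < 0 := lt_of_le_of_ne hp' (hmu' p hp)
    have hqpos : 0 < h q := lt_of_le_of_ne hq' (Ne.symm (hmu' q hq))
    have hsub : ∀ u v : ℝ, b < u → Set.Icc u v ⊆ Set.Ioi 1 := by
      intro u v hu x hx
      have := hx.1
      simp only [Set.mem_Ioi]
      linarith
    rcases le_total p q with hpq | hpq
    · obtain ⟨c, hc, hc0⟩ := intermediate_value_Icc hpq (hg2cont.mono (hsub p q hp))
        (⟨hpneg.le, hqpos.le⟩ : (0:ℝ) ∈ Set.Icc (h p) (h q))
      exact hmu' c (lt_of_lt_of_le hp hc.1) hc0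
    · obtain ⟨c, hc, hc0⟩ := intermediate_value_Icc' hpq (hg2cont.mono (hsub q p hq))
        (⟨hpneg.le, hqpos.le⟩ : (0:ℝ) ∈ Set.Icc (h p) (h q))
      exact hmu' c (lt_of_lt_of_le hq hc.1) hc0
  have hsubI : Set.Ici (b+1) ⊆ Set.Ioi 1 := fun x hx => by
    simp only [Set.mem_Ioi]; have := Set.mem_Ici.mp hx; linarith
  rcases hsign with hpos | hneg
  · -- convex case: conclude
    have hmono : StrictMonoOn (deriv g) (Set.Ici (b+1)) := by
      apply strictMonoOn_of_deriv_pos (convex_Ici _) (hg'cont.mono hsubI)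
      intro x hx
      rw [interior_Ici] at hx
      exact hpos x (by have := Set.mem_Ioi.mp hx; linarith)
    refine ⟨b+1, by linarith, by linarith, hmono, ?_, fun x hx => hgdiff x (by linarith)⟩
    intro x hx
    by_contra hcon
    push_neg at hcon
    have hgm : StrictMonoOn g (Set.Ici x) := by
      apply strictMonoOn_of_deriv_pos (convex_Ici _) (hgcont.mono (fun t ht => by
        simp only [Set.mem_Ioi]; have := Set.mem_Ici.mp ht; linarith))
      intro t ht
      rw [interior_Ici] at ht
      have htx : x < t := Set.mem_Ioi.mp ht
      have := hmono (Set.mem_Ici.mpr hx) (Set.mem_Ici.mpr (by linarith)) htx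
      linarith
    have h1 : g x < g (x+1) := hgm (Set.mem_Ici.mpr le_rfl) (Set.mem_Ici.mpr (by linarith)) (by linarith)
    have h2 : g (x+1) < g x := hganti (Set.mem_Ici.mpr (by linarith)) (Set.mem_Ici.mpr (by linarith)) (by linarith)
    linarith
  · -- concave case: contradiction
    exfalso
    have hanti' : StrictAntiOn (deriv g) (Set.Ici (b+1)) := by
      apply strictAntiOn_of_deriv_neg (convex_Ici _) (hg'cont.mono hsubI)
      intro x hx
      rw [interior_Ici] at hx
      exact hneg x (by have := Set.mem_Ioi.mp hx; linarith)
    by_cases hex : ∃ x, b + 1 ≤ x ∧ deriv g x < 0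
    · obtain ⟨x₂, hx₂, hd⟩ := hex
      set d := deriv g x₂ with hdd
      set X := x₂ + g x₂ / (-d) + 1 with hX
      have hgx2 : 0 < g x₂ := hgpos x₂ (by linarith)
      have hfrac : 0 < g x₂ / (-d) := div_pos hgx2 (by linarith)
      have hx₂X : x₂ < X := by rw [hX]; linarith
      obtain ⟨c, hc, hslope⟩ := exists_hasDerivAt_eq_slope g (deriv g) hx₂X
        (hgcont.mono (fun x hx => by simp only [Set.mem_Ioi]; have := hx.1; linarith))
        (fun x hx => hgdiff x (by have := hx.1; linarith))
      have hcd : deriv g c < d := hanti' (Set.mem_Ici.mpr hx₂) (Set.mem_Ici.mpr (by linarith [hc.1])) hc.1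
      have hgX : g X - g x₂ = deriv g c * (X - x₂) := by
        rw [eq_div_iff (by linarith : X - x₂ ≠ 0)] at hslope
        linarith [hslope]
      have hXpos : 0 < g X := hgpos X (by linarith)
      have hkey : g X < g x₂ + d * (X - x₂) := by
        rw [sub_eq_iff_eq_add] at hgX
        rw [hgX]
        have : deriv g c * (X - x₂) < d * (X - x₂) :=
          mul_lt_mul_of_pos_right hcd (by linarith)
        linarith
      have hXx2 : X - x₂ = g x₂ / -d + 1 := by rw [hX]; ring
      have hd0 : d ≠ 0 := ne_of_lt hd
      have : g x₂ + d * (X - x₂) = d := by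
        rw [hXx2, mul_add, mul_one]
        have : d * (g x₂ / -d) = -g x₂ := by
          rw [div_neg, mul_neg, mul_div_cancel₀ _ hd0]
        rw [this]; ring
      linarith
    · push_neg at hex
      have hmono : MonotoneOn g (Set.Ici (b+1)) := by
        apply monotoneOn_of_deriv_nonneg (convex_Ici _) (hgcont.mono hsubI)
        · intro x hx
          rw [interior_Ici] at hx
          exact ((hgdiff x (by have := Set.mem_Ioi.mp hx; linarith)).differentiableAt).differentiableWithinAt
        · intro x hx
          rw [interior_Ici] at hx
          exact hex x (le_of_lt (Set.mem_Ioi.mp hx))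
      have h1 : g (b+1) ≤ g (b+2) := hmono (Set.mem_Ici.mpr (by linarith)) (Set.mem_Ici.mpr (by linarith)) (by linarith)
      have h2 : g (b+2) < g (b+1) := hganti (Set.mem_Ici.mpr (by linarith)) (Set.mem_Ici.mpr (by linarith)) (by linarith)
      linarith

lemma tail_bounds(φ : ℝ → ℝ)
    (hφ_pos : ∀ x : ℝ, 1 ≤ x → 0 < φ x)
    (hφ_C2 : ContDiffOn ℝ 2 φ (Set.Ici 1))
    (x₀ : ℝ) (hanti : StrictAntiOn φ (Set.Ici x₀))
    (hφ_decay : ∀ l : ℝ, 0 < l → Tendsto (fun x : ℝ => x ^ l * φ x) atTop (nhds 0))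
    (hφ_mu : ∀ μ : ℝ, μ ≠ 0 → |μ| ≤ 1 → ∃ ω₀ : ℝ, ∀ x : ℝ, ω₀ < x →
      deriv (deriv (fun t : ℝ => φ t ^ μ)) x ≠ 0)
    (hInt : IntegrableOn φ (Set.Ici 1))
    (δ : ℝ) (hδ0 : 0 < δ) (hδ1 : δ < 1) :
    ∃ A : ℝ, 2 ≤ A ∧ ∀ ω : ℝ, A ≤ ω →
      (0 < φ ω ∧ φ ω < 1) ∧
      (δ/2) * φ ω ^ (1+δ) ≤ (∫ x in Set.Ioi ω, φ x) ∧
      (∫ x in Set.Ioi ω, φ x) ≤ φ ω ^ (1-δ) := by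
  obtain ⟨ω₁, hmu1⟩ := hφ_mu 1 one_ne_zero (by norm_num)
  obtain ⟨a₁, h2a₁, hx₀a₁, hmono1, hneg1, hderiv1⟩ :=
    conv_mu φ hφ_pos hφ_C2 x₀ hanti 1 one_pos ω₁ hmu1
  have hφ1 : (fun t : ℝ => φ t ^ (1:ℝ)) = φ := by funext t; exact Real.rpow_one _
  rw [hφ1] at hmono1 hneg1 hderiv1
  obtain ⟨ωδ, hmuδ⟩ := hφ_mu δ (ne_of_gt hδ0) (by rw [abs_of_pos hδ0]; linarith)
  obtain ⟨aδ, h2aδ, hx₀aδ, hmonoδ, hnegδ, hderivδ⟩ :=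
    conv_mu φ hφ_pos hφ_C2 x₀ hanti δ hδ0 ωδ hmuδ
  -- φ → 0 at top
  have htends : Tendsto φ atTop (nhds 0) := by
    have h1 := hφ_decay 1 one_pos
    have hub : ∀ᶠ x : ℝ in atTop, φ x ≤ x ^ (1:ℝ) * φ x := by
      filter_upwards [eventually_ge_atTop (1:ℝ)] with x hx
      rw [Real.rpow_one]
      nlinarith [(hφ_pos x hx).le]
    have h0 : ∀ᶠ x : ℝ in atTop, 0 ≤ φ x := by
      filter_upwards [eventually_ge_atTop (1:ℝ)] with x hx
      exact (hφ_pos x hx).le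
    exact tendsto_of_tendsto_of_tendsto_of_le_of_le' tendsto_const_nhds h1 h0 hub
  -- thresholds
  have h2δ : 0 < 2/δ := by positivity
  obtain ⟨A₂, hA₂⟩ := eventually_atTop.mp
    (((hφ_decay (2/δ) h2δ).eventually_lt_const one_pos).mono (fun x hx => hx.le))
  obtain ⟨A₃, hA₃⟩ := eventually_atTop.mp (htends.eventually_lt_const one_pos)
  set A : ℝ := max (max a₁ aδ) (max A₂ A₃) + 1 with hAdef
  have hAa₁ : a₁ ≤ A - 1 := by
    have := le_max_left a₁ aδ; have := le_max_left (max a₁ aδ) (max A₂ A₃); simp only [hAdef]; linarith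
  have hAaδ : aδ ≤ A - 1 := by
    have := le_max_right a₁ aδ; have := le_max_left (max a₁ aδ) (max A₂ A₃); simp only [hAdef]; linarith
  have hAA₂ : A₂ ≤ A - 1 := by
    have := le_max_left A₂ A₃; have := le_max_right (max a₁ aδ) (max A₂ A₃); simp only [hAdef]; linarith
  have hAA₃ : A₃ ≤ A - 1 := by
    have := le_max_right A₂ A₃; have := le_max_right (max a₁ aδ) (max A₂ A₃); simp only [hAdef]; linarith
  have h2A : 2 ≤ A := by linarith
  refine ⟨A, h2A, ?_⟩
  intro ω hω
  have hω2 : 2 ≤ ω := le_trans h2A hω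
  have hω1 : (1:ℝ) ≤ ω := by linarith
  have hωpos : (0:ℝ) < ω := by linarith
  have hφω : 0 < φ ω := hφ_pos ω hω1
  have hφω1 : φ ω < 1 := hA₃ ω (by linarith)
  have hωa₁ : a₁ ≤ ω := by linarith
  have hωaδ : aδ ≤ ω := by linarith
  have hωx₀ : x₀ ≤ ω := by linarith
  have hIntω : IntegrableOn φ (Set.Ioi ω) :=
    hInt.mono_set (fun x hx => Set.mem_Ici.mpr (le_trans hω1 (le_of_lt hx)))
  constructor
  · exact ⟨hφω, hφω1⟩
  constructor
  · -- LOWER BOUND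
    set d : ℝ := deriv φ ω with hd
    have hdneg : d < 0 := hneg1 ω hωa₁
    set p : ℝ := -d with hp
    have hppos : 0 < p := by simp only [hp]; linarith
    set L : ℝ := φ ω / p with hL
    have hLpos : 0 < L := div_pos hφω hppos
    -- pointwise linear lower bound on [ω, ω+L]
    have hlin : ∀ t ∈ Set.Icc ω (ω+L), φ ω + d * (t - ω) ≤ φ t := by
      rintro t ⟨ht1, ht2⟩
      rcases eq_or_lt_of_le ht1 with rfl | hlt
      · simp
      · obtain ⟨c, hc, hslope⟩ := exists_hasDerivAt_eq_slope φ (deriv φ) hlt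
          (hφ_C2.continuousOn.mono (fun s hs => Set.mem_Ici.mpr (by
            have := hs.1; linarith)))
          (fun s hs => hderiv1 s (by have := hs.1; linarith))
        have hcd : d < deriv φ c :=
          hmono1 (Set.mem_Ici.mpr hωa₁) (Set.mem_Ici.mpr (by linarith [hc.1])) hc.1
        rw [eq_div_iff (by linarith : t - ω ≠ 0)] at hslope
        nlinarith [mul_lt_mul_of_pos_right hcd (by linarith : (0:ℝ) < t - ω)]
    -- integral of the linear minorant
    have hIl : ∫ t in ω..(ω+L), (φ ω + d*(t-ω)) = φ ω * L + d * L^2/2 := by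
      have h1 : (fun t : ℝ => φ ω + d*(t-ω)) = fun t => (φ ω - d*ω) + d * t := by
        funext t; ring
      rw [h1, intervalIntegral.integral_add intervalIntegrable_const
        ((intervalIntegral.intervalIntegrable_id).const_mul d),
        intervalIntegral.integral_const, intervalIntegral.integral_const_mul, integral_id]
      simp only [smul_eq_mul]
      ring
    have hIlval : φ ω * L + d * L^2/2 = φ ω ^ (2:ℝ) / (2*p) := by
      have : φ ω ^ (2:ℝ) = φ ω * φ ω := by
        rw [show (2:ℝ) = (2:ℕ) by norm_num, Real.rpow_natCast]; ring
      rw [this, hL]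
      have hd' : d = -p := by simp [hp]
      rw [hd']
      field_simp
      ring
    -- chain of integral inequalities
    have hstep1 : ∫ t in Set.Ioc ω (ω+L), (φ ω + d*(t-ω)) ≤ ∫ t in Set.Ioc ω (ω+L), φ t := by
      apply setIntegral_mono_on
      · exact (Continuous.integrableOn_Ioc (by fun_prop))
      · exact hIntω.mono_set Set.Ioc_subset_Ioi_self
      · exact measurableSet_Ioc
      · intro t ht
        exact hlin t (Set.Ioc_subset_Icc_self ht)
    have hstep2 : ∫ t in Set.Ioc ω (ω+L), φ t ≤ ∫ x in Set.Ioi ω, φ x := by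
      apply setIntegral_mono_set hIntω
      · exact (ae_restrict_iff' measurableSet_Ioi).mpr (Filter.Eventually.of_forall
          (fun x hx => (hφ_pos x (le_trans hω1 (le_of_lt hx))).le))
      · exact HasSubset.Subset.eventuallyLE Set.Ioc_subset_Ioi_self
    have hIoc : ∫ t in Set.Ioc ω (ω+L), (φ ω + d*(t-ω)) = φ ω ^ (2:ℝ) / (2*p) := by
      rw [← intervalIntegral.integral_of_le (by linarith : ω ≤ ω + L), hIl, hIlval]
    -- bound p via convexity of φ^δ
    set g : ℝ → ℝ := fun t => φ t ^ δ with hgdef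
    have hgω : HasDerivAt g (d * δ * φ ω ^ (δ-1)) ω := by
      have := (hderiv1 ω hωa₁).rpow_const (p := δ) (Or.inl (ne_of_gt hφω))
      exact this
    have hgderiv : deriv g ω = d * δ * φ ω ^ (δ-1) := hgω.deriv
    obtain ⟨c, hc, hslope⟩ := exists_hasDerivAt_eq_slope g (deriv g) (by linarith : ω - 1 < ω)
      ((hφ_C2.continuousOn.rpow_const (fun s hs => Or.inr hδ0.le)).mono
        (fun s hs => Set.mem_Ici.mpr (by have := hs.1; linarith)))
      (fun s hs => hderivδ s (by have := hs.1; linarith))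
    have hcd : deriv g c < deriv g ω :=
      hmonoδ (Set.mem_Ici.mpr (by linarith [hc.1])) (Set.mem_Ici.mpr hωaδ) hc.2
    have hgω1 : g (ω - 1) ≤ 1 := by
      have h1 : φ (ω-1) < 1 := hA₃ (ω-1) (by linarith)
      exact Real.rpow_le_one (hφ_pos (ω-1) (by linarith)).le h1.le hδ0.le
    have hgpos' : 0 < g ω := Real.rpow_pos_of_pos hφω δ
    have hpbound : p * (δ * φ ω ^ (δ-1)) ≤ 1 := by
      have h1 : g ω - g (ω-1) = deriv g c * (ω - (ω-1)) := by
        rw [eq_div_iff (by norm_num : ω - (ω-1) ≠ 0)] at hslope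
        linarith [hslope]
      simp only [show ω - (ω-1) = 1 by ring, mul_one] at h1
      have h2 : -(deriv g ω) < g (ω-1) - g ω := by linarith
      have h3 : -(deriv g ω) = p * (δ * φ ω ^ (δ-1)) := by
        rw [hgderiv]; simp only [hp]; ring
      rw [← h3]
      linarith [h2, hgω1, hgpos']
    have hpowpos : 0 < φ ω ^ (1-δ) := Real.rpow_pos_of_pos hφω _
    have hpδ : p * δ ≤ φ ω ^ (1-δ) := by
      have hpow : φ ω ^ (δ-1) = (φ ω ^ (1-δ))⁻¹ := by
        rw [show δ-1 = -(1-δ) by ring, Real.rpow_neg hφω.le]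
      rw [hpow] at hpbound
      have key : p * (δ * (φ ω ^ (1-δ))⁻¹) * (φ ω ^ (1-δ)) = p * δ := by
        field_simp
      have := mul_le_mul_of_nonneg_right hpbound hpowpos.le
      rw [key, one_mul] at this
      exact this
    -- conclude lower bound
    have hfinal : (δ/2) * φ ω ^ (1+δ) ≤ φ ω ^ (2:ℝ) / (2*p) := by
      rw [le_div_iff₀ (by linarith : (0:ℝ) < 2*p)]
      have hmul : φ ω ^ (1-δ) * φ ω ^ (1+δ) = φ ω ^ (2:ℝ) := by
        rw [← Real.rpow_add hφω]; norm_num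
      have hpowpos' : (0:ℝ) ≤ φ ω ^ (1+δ) := (Real.rpow_pos_of_pos hφω _).le
      have e1 : δ/2 * φ ω ^ (1+δ) * (2*p) = (p*δ) * φ ω ^ (1+δ) := by ring
      rw [e1, ← hmul]
      exact mul_le_mul_of_nonneg_right hpδ hpowpos'
    calc (δ/2) * φ ω ^ (1+δ) ≤ φ ω ^ (2:ℝ) / (2*p) := hfinal
      _ = ∫ t in Set.Ioc ω (ω+L), (φ ω + d*(t-ω)) := hIoc.symm
      _ ≤ ∫ t in Set.Ioc ω (ω+L), φ t := hstep1
      _ ≤ ∫ x in Set.Ioi ω, φ x := hstep2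
  · -- UPPER BOUND
    have hIntR : IntegrableOn (fun x : ℝ => φ ω ^ (1-δ) * x ^ (-2:ℝ)) (Set.Ioi ω) :=
      (integrableOn_Ioi_rpow_of_lt (by norm_num) hωpos).const_mul _
    have hup : ∀ x ∈ Set.Ioi ω, φ x ≤ φ ω ^ (1-δ) * x ^ (-2:ℝ) := by
      intro x hx
      have hxω : ω < x := hx
      have hφx : 0 < φ x := hφ_pos x (by linarith)
      have hxpos : 0 < x := by linarith
      have hφxω : φ x < φ ω := hanti (Set.mem_Ici.mpr hωx₀) (Set.mem_Ici.mpr (by linarith)) hxω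
      have step2 : φ x ^ δ ≤ x ^ (-2:ℝ) := by
        have hx2 : x ^ (2/δ) * φ x ≤ 1 := hA₂ x (by linarith)
        have hxp : 0 < x ^ (2/δ) := Real.rpow_pos_of_pos hxpos _
        have h1 : φ x ≤ x ^ (-(2/δ)) := by
          rw [Real.rpow_neg hxpos.le, inv_eq_one_div, le_div_iff₀ hxp]
          linarith [hx2]
        calc φ x ^ δ ≤ (x ^ (-(2/δ))) ^ δ := Real.rpow_le_rpow hφx.le h1 hδ0.le
          _ = x ^ (-2:ℝ) := by
              rw [← Real.rpow_mul hxpos.le]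
              congr 1
              field_simp
      calc φ x = φ x ^ (1-δ) * φ x ^ δ := by
            rw [← Real.rpow_add hφx]; norm_num
        _ ≤ φ ω ^ (1-δ) * x ^ (-2:ℝ) := by
            apply mul_le_mul (Real.rpow_le_rpow hφx.le hφxω.le (by linarith)) step2
              (Real.rpow_nonneg hφx.le _) (Real.rpow_nonneg hφω.le _)
    have hmono' := setIntegral_mono_on hIntω hIntR measurableSet_Ioi hup
    rw [integral_const_mul, integral_Ioi_rpow_of_lt (by norm_num) hωpos] at hmono'
    have hval : -ω ^ ((-2:ℝ)+1)/((-2:ℝ)+1) = ω ^ (-1:ℝ) := by norm_num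
    rw [hval] at hmono'
    have hω1' : ω ^ (-1:ℝ) ≤ 1 :=
      Real.rpow_le_one_of_one_le_of_nonpos hω1 (by norm_num)
    calc (∫ x in Set.Ioi ω, φ x) ≤ φ ω ^ (1-δ) * ω ^ (-1:ℝ) := hmono'
      _ ≤ φ ω ^ (1-δ) * 1 := by
          apply mul_le_mul_of_nonneg_left hω1' (Real.rpow_nonneg hφω.le _)
      _ = φ ω ^ (1-δ) := mul_one _

/-- **Lemma 2 i.** If `φ` is a `C²` probability density, strictly positive on `[1,∞)`,
eventually strictly decreasing, decaying faster than any power, and such that the second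
derivative of `φ^μ` is eventually nonvanishing for every `0 < |μ| ≤ 1`, then for a random
variable `W` with density `φ` and `β > 0`, the random variable `Y = φ(W)^{-β}` has a
power-law-like tail with exponent `1/β`:
`log Pr{Y > y} / log y → -1/β` as `y → ∞`. -/
theorem stmt_1
    {Ω : Type*} [MeasureSpace Ω] [IsProbabilityMeasure (ℙ : Measure Ω)]
    (φ : ℝ → ℝ) (W : Ω → ℝ) (β : ℝ)
    (hβ : 0 < β)
    (hφ_supp : ∀ x : ℝ, x < 1 → φ x = 0)
    (hφ_pos : ∀ x : ℝ, 1 ≤ x → 0 < φ x)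
    (hφ_int : ∫ x in Set.Ici (1 : ℝ), φ x = 1)
    (hφ_C2 : ContDiffOn ℝ 2 φ (Set.Ici 1))
    (hφ_anti : ∃ x₀ : ℝ, StrictAntiOn φ (Set.Ici x₀))
    (hφ_decay : ∀ l : ℝ, 0 < l →
      Tendsto (fun x : ℝ => x ^ l * φ x) atTop (nhds 0))
    (hφ_mu : ∀ μ : ℝ, μ ≠ 0 → |μ| ≤ 1 → ∃ ω₀ : ℝ, ∀ x : ℝ, ω₀ < x →
      deriv (deriv (fun t : ℝ => φ t ^ μ)) x ≠ 0)
    (hW_meas : Measurable W)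
    (hW_dist : Measure.map W ℙ
      = MeasureTheory.volume.withDensity (fun x => ENNReal.ofReal (φ x))) :
    Tendsto
      (fun y : ℝ =>
        Real.log (ℙ {a : Ω | y < φ (W a) ^ (-β)}).toReal / Real.log y)
      atTop (nhds (-(1 / β))) := by
  obtain ⟨x₀, hanti⟩ := hφ_anti
  have hInt : IntegrableOn φ (Set.Ici 1) := by
    by_contra hc
    rw [MeasureTheory.integral_undef hc] at hφ_int
    norm_num at hφ_int
  have htends : Tendsto φ atTop (nhds 0) := by
    have h1 := hφ_decay 1 one_pos
    have hub : ∀ᶠ x : ℝ in atTop, φ x ≤ x ^ (1:ℝ) * φ x := by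
      filter_upwards [eventually_ge_atTop (1:ℝ)] with x hx
      rw [Real.rpow_one]
      nlinarith [(hφ_pos x hx).le]
    have h0 : ∀ᶠ x : ℝ in atTop, 0 ≤ φ x := by
      filter_upwards [eventually_ge_atTop (1:ℝ)] with x hx
      exact (hφ_pos x hx).le
    exact tendsto_of_tendsto_of_tendsto_of_le_of_le' tendsto_const_nhds h1 h0 hub
  set c : ℝ := 1/β with hc
  have hc0 : 0 < c := by positivity
  have hβc : β * c = 1 := by rw [hc]; field_simp
  rw [Metric.tendsto_nhds]
  intro η hη
  -- choose δ
  set δ : ℝ := min (β*η/4) (1/2) with hδdef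
  have hδ0 : 0 < δ := lt_min (by positivity) (by norm_num)
  have hδ1 : δ < 1 := lt_of_le_of_lt (min_le_right _ _) (by norm_num)
  have hδβη : δ ≤ β*η/4 := min_le_left _ _
  obtain ⟨A, h2A, hbounds⟩ := tail_bounds φ hφ_pos hφ_C2 x₀ hanti hφ_decay hφ_mu hInt δ hδ0 hδ1
  set x₁ : ℝ := max A (x₀+1) with hx₁def
  have hx₁A : A ≤ x₁ := le_max_left _ _
  have hx₁x₀ : x₀ + 1 ≤ x₁ := le_max_right _ _
  have hx₁2 : (2:ℝ) ≤ x₁ := le_trans h2A hx₁A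
  have hx₁1 : (1:ℝ) ≤ x₁ := by linarith
  -- minimum of φ on [1, x₁]
  obtain ⟨z, hz, hzmin⟩ := (isCompact_Icc : IsCompact (Set.Icc (1:ℝ) x₁)).exists_isMinOn
    ⟨1, by constructor <;> [rfl; linarith]⟩
    (hφ_C2.continuousOn.mono (fun s hs => Set.mem_Ici.mpr hs.1))
  have hφz : 0 < φ z := hφ_pos z hz.1
  have hφx₁ : 0 < φ x₁ := hφ_pos x₁ hx₁1
  -- eventual conditions on y
  have hev1 : ∀ᶠ y : ℝ in atTop, y ^ (-(1/β)) < min (φ z) (φ x₁) :=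
    (tendsto_rpow_neg_atTop (by positivity : (0:ℝ) < 1/β)).eventually_lt_const
      (lt_min hφz hφx₁)
  have hev2 : ∀ᶠ y : ℝ in atTop, -Real.log (δ/2) ≤ η/4 * Real.log y := by
    have := (Real.tendsto_log_atTop).eventually_ge_atTop ((-Real.log (δ/2)) / (η/4))
    filter_upwards [this] with y hy
    rw [div_le_iff₀ (by positivity : (0:ℝ) < η/4)] at hy
    linarith
  filter_upwards [hev1, hev2, eventually_gt_atTop (1:ℝ)] with y hyε hylog hy1
  have hy0 : (0:ℝ) < y := by linarith
  set D : ℝ := Real.log y with hD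
  have hD0 : 0 < D := Real.log_pos hy1
  set ε : ℝ := y ^ (-(1/β)) with hε
  have hε0 : 0 < ε := Real.rpow_pos_of_pos hy0 _
  have hεz : ε < φ z := lt_of_lt_of_le hyε (min_le_left _ _)
  have hεx₁ : ε < φ x₁ := lt_of_lt_of_le hyε (min_le_right _ _)
  -- find ω with φ ω = ε
  obtain ⟨x₂, hx₂⟩ := ((htends.eventually_lt_const hε0).and
    (eventually_ge_atTop (x₁+1))).exists
  obtain ⟨hφx₂, hx₂x₁⟩ := hx₂
  have hx₁x₂ : x₁ ≤ x₂ := by linarith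
  obtain ⟨ω, hωmem, hφωε⟩ := intermediate_value_Ioo' hx₁x₂
    (hφ_C2.continuousOn.mono (fun s hs => Set.mem_Ici.mpr (by linarith [hs.1])))
    (⟨hφx₂, hεx₁⟩ : ε ∈ Set.Ioo (φ x₂) (φ x₁))
  have hωx₁ : x₁ < ω := hωmem.1
  have hω1 : (1:ℝ) ≤ ω := by linarith
  have hωx₀ : x₀ ≤ ω := by linarith
  -- the event set equals Ioi ω
  have hyεβ : y = ε ^ (-β) := by
    rw [hε, ← Real.rpow_mul hy0.le,
      show (-(1/β)) * (-β) = 1 by field_simp, Real.rpow_one]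
  have hS : {x : ℝ | y < φ x ^ (-β)} = Set.Ioi ω := by
    ext x
    simp only [Set.mem_setOf_eq, Set.mem_Ioi]
    constructor
    · intro hx
      by_contra hcon
      push_neg at hcon
      rcases lt_or_ge x 1 with hx1 | hx1
      · rw [hφ_supp x hx1, Real.zero_rpow (by linarith : -β ≠ 0)] at hx
        linarith
      · have hφxpos : 0 < φ x := hφ_pos x hx1
        have hφxε : ε ≤ φ x := by
          rcases le_or_gt x x₁ with hxx₁ | hxx₁
          · exact le_trans hεz.le (hzmin ⟨hx1, hxx₁⟩)
          · rcases eq_or_lt_of_le hcon with rfl | hxω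
            · exact le_of_eq hφωε.symm
            · refine le_of_lt ?_
              calc ε = φ ω := hφωε.symm
                _ < φ x := hanti (Set.mem_Ici.mpr (by linarith)) (Set.mem_Ici.mpr hωx₀) hxω
        have : φ x ^ (-β) ≤ ε ^ (-β) := by
          rcases eq_or_lt_of_le hφxε with heq | hlt
          · rw [heq]
          · exact (Real.rpow_lt_rpow_of_neg hε0 hlt (by linarith)).le
        rw [← hyεβ] at this
        linarith
    · intro hx
      have hφx : 0 < φ x := hφ_pos x (by linarith)
      have hφxω : φ x < φ ω := hanti (Set.mem_Ici.mpr hωx₀) (Set.mem_Ici.mpr (by linarith)) hx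
      rw [hφωε] at hφxω
      rw [hyεβ]
      exact Real.rpow_lt_rpow_of_neg hφx hφxω (by linarith)
  -- compute the probability
  have hIntω : IntegrableOn φ (Set.Ioi ω) :=
    hInt.mono_set (fun x hx => Set.mem_Ici.mpr (le_trans hω1 (le_of_lt hx)))
  set T : ℝ := ∫ x in Set.Ioi ω, φ x with hT
  have hT0' : 0 ≤ T := setIntegral_nonneg measurableSet_Ioi
    (fun x hx => (hφ_pos x (le_trans hω1 (le_of_lt hx))).le)
  have hP : (ℙ {a : Ω | y < φ (W a) ^ (-β)}).toReal = T := by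
    have hpre : {a : Ω | y < φ (W a) ^ (-β)} = W ⁻¹' (Set.Ioi ω) := by
      rw [← hS]; rfl
    rw [hpre, ← Measure.map_apply hW_meas measurableSet_Ioi, hW_dist,
      withDensity_apply _ measurableSet_Ioi]
    rw [← MeasureTheory.ofReal_integral_eq_lintegral_ofReal hIntω
      ((ae_restrict_iff' measurableSet_Ioi).mpr (Filter.Eventually.of_forall
        (fun x hx => (hφ_pos x (le_trans hω1 (le_of_lt hx))).le)))]
    exact ENNReal.toReal_ofReal hT0'
  -- bounds
  obtain ⟨⟨hφωpos, hφω1⟩, hlow, hup⟩ := hbounds ω (by linarith)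
  have hT0 : 0 < T := lt_of_lt_of_le (by positivity) hlow
  -- logs
  have hlφ : Real.log (φ ω) = -c * D := by
    rw [hφωε, hε, Real.log_rpow hy0, hD, hc]
  have hupl : Real.log T ≤ (1-δ) * (-c * D) := by
    rw [← hlφ]
    calc Real.log T ≤ Real.log (φ ω ^ (1-δ)) := (Real.log_le_log_iff hT0 (by positivity)).mpr hup
      _ = (1-δ) * Real.log (φ ω) := Real.log_rpow hφωpos _
  have hlowl : Real.log (δ/2) + (1+δ) * (-c * D) ≤ Real.log T := by
    rw [← hlφ]
    calc Real.log (δ/2) + (1+δ) * Real.log (φ ω)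
        = Real.log ((δ/2) * φ ω ^ (1+δ)) := by
          rw [Real.log_mul (by positivity) (by positivity), Real.log_rpow hφωpos]
      _ ≤ Real.log T := (Real.log_le_log_iff (by positivity) hT0).mpr hlow
  -- numeric conclusion
  have hδc : δ * c ≤ η/4 := by
    have h1 : δ * c ≤ (β*η/4) * c := mul_le_mul_of_nonneg_right hδβη hc0.le
    have h2 : (β*η/4) * c = η/4 * (β*c) := by ring
    rw [h2, hβc, mul_one] at h1
    exact h1
  have hδcD : δ * c * D ≤ η/4 * D := mul_le_mul_of_nonneg_right hδc hD0.le
  have hlog2 : -Real.log (δ/2) ≤ η/4 * D := hylog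
  rw [Real.dist_eq, hP]
  have hD' : D ≠ 0 := ne_of_gt hD0
  have he : Real.log T / D - (-(1/β)) = (Real.log T + c * D) / D := by
    rw [hc, sub_neg_eq_add, add_div, mul_div_assoc, div_self hD', mul_one]
  have hηD : 0 < η * D := mul_pos hη hD0
  rw [he, abs_lt]
  clear_value T D c δ ε x₁
  constructor
  · rw [lt_div_iff₀ hD0]
    linarith [hlowl, hlog2, hδcD, hηD]
  · rw [div_lt_iff₀ hD0]
    linarith [hupl, hδcD, hηD]
end

section
/- Let φ satisfy the regularity assumptions: φ is C² and strictly positive on [1,∞), eventually strictly decreasing, φ decays faster than any power (ω^l·φ(ω) → 0 as ω → ∞ for every l > 0), and for every μ with 0 < |μ| ≤ 1 there is ω₀(μ) such that the second derivative of φ^μ has no zero on (ω₀(μ),∞). Then the density and its tail have the same logarithmic decay: lim_{z→∞} ln φ(z)/ln F*(z) = 1, where F*(z) = ∫_z^∞ φ(ω)dω. Equivalently, φ((F*)⁻¹(1/y)) = y^{−1+o_y(1)} as y → ∞. -/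
open MeasureTheory Filter Set

lemma aux_convex (g : ℝ → ℝ) (a : ℝ) (hg : ContDiffOn ℝ 2 g (Set.Ioi a))
    (hpos : ∀ x, a < x → 0 < g x) (h0 : Tendsto g atTop (nhds 0))
    (hne : ∀ x, a < x → deriv (deriv g) x ≠ 0) :
    ∃ b K, a < b ∧ 0 < K ∧ ∀ z, b ≤ z →
      ∀ ω ∈ Set.Icc z (z + g z / (2*K)), g z / 2 ≤ g ω := by
  have hopen : IsOpen (Ioi a) := isOpen_Ioi
  have hg1 : ContDiffOn ℝ 1 (deriv g) (Ioi a) := hg.deriv_of_isOpen hopen (by norm_num)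
  have hg0 : ContDiffOn ℝ 0 (deriv (deriv g)) (Ioi a) := hg1.deriv_of_isOpen hopen (by norm_num)
  have hcont2 : ContinuousOn (deriv (deriv g)) (Ioi a) := hg0.continuousOn
  have hcont1 : ContinuousOn (deriv g) (Ioi a) := hg1.continuousOn
  have hcont : ContinuousOn g (Ioi a) := hg.continuousOn
  have hdiff : ∀ x ∈ Ioi a, DifferentiableAt ℝ g x := fun x hx =>
    (hg.contDiffAt (hopen.mem_nhds hx)).differentiableAt (by norm_num)
  -- contradiction helpers
  have subA : ∀ c, a < c → (∀ x ∈ Ioi c, 0 ≤ deriv g x) → False := by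
    intro c hc hge
    have hsub : Ici c ⊆ Ioi a := fun x hx => lt_of_lt_of_le hc hx
    have hmono : MonotoneOn g (Ici c) :=
      monotoneOn_of_deriv_nonneg (convex_Ici c) (hcont.mono hsub)
        (fun x hx => (hdiff x (hsub (interior_subset hx))).differentiableWithinAt)
        (by rw [interior_Ici]; exact hge)
    have hev : ∀ᶠ x in atTop, g x < g c := h0.eventually (gt_mem_nhds (hpos c hc))
    rcases (hev.and (eventually_ge_atTop c)).exists with ⟨x, hx1, hx2⟩
    exact absurd (hmono (le_refl c : c ∈ Ici c) hx2 hx2) (not_le.mpr hx1)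
  have subB : ∀ c, a < c → deriv g c < 0 →
      (∀ x ∈ Ioi c, deriv g x ≤ deriv g c) → False := by
    intro c hc hdc hle
    set m := deriv g c with hm
    have hsub : Ici c ⊆ Ioi a := fun x hx => lt_of_lt_of_le hc hx
    -- u x = g x - m * x is antitone on Ici c
    have hanti : AntitoneOn (fun x => g x - m * x) (Ici c) := by
      apply antitoneOn_of_deriv_nonpos (convex_Ici c)
      · exact (hcont.mono hsub).sub ((continuous_const.mul continuous_id).continuousOn)
      · intro x hx
        rw [interior_Ici] at hx
        exact ((hdiff x (hsub (mem_Ici.mpr (le_of_lt (mem_Ioi.mp hx))))).sub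
          ((differentiableAt_id.const_mul m))).differentiableWithinAt
      · intro x hx
        rw [interior_Ici] at hx
        have hlin : HasDerivAt (fun y : ℝ => m * y) m x := by
          simpa using (hasDerivAt_id x).const_mul m
        rw [show deriv (fun x => g x - m * x) x = deriv g x - m from
          ((hdiff x (hsub (mem_Ici.mpr (le_of_lt (mem_Ioi.mp hx))))).hasDerivAt.sub hlin).deriv, sub_nonpos]
        exact hle x hx
    have hm0 : m ≠ 0 := ne_of_lt hdc
    have hq : 0 < (g c + 1) / (-m) := div_pos (by linarith [hpos c hc]) (by linarith)
    set x := c + (g c + 1) / (-m) with hx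
    have hxgt : c < x := by rw [hx]; linarith
    have h2 : g x - m * x ≤ g c - m * c :=
      hanti (le_refl c : c ∈ Ici c) (le_of_lt hxgt : x ∈ Ici c) (le_of_lt hxgt)
    have hmx : m * (x - c) = -(g c + 1) := by
      have hxc : x - c = (g c + 1) / -m := by rw [hx]; ring
      rw [hxc, ← mul_div_assoc, div_eq_iff (neg_ne_zero.mpr hm0)]
      ring
    have hgx : g x ≤ -1 := by nlinarith [h2, hmx]
    linarith [hpos x (lt_trans hc hxgt)]
  -- sign of second derivative is constant
  have hsign : (∀ x ∈ Ioi a, 0 < deriv (deriv g) x) ∨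
      (∀ x ∈ Ioi a, deriv (deriv g) x < 0) := by
    have himg : IsPreconnected (deriv (deriv g) '' Ioi a) :=
      (isPreconnected_Ioi).image _ hcont2
    have hcover : deriv (deriv g) '' Ioi a ⊆ Iio 0 ∪ Ioi 0 := by
      rintro y ⟨x, hx, rfl⟩
      rcases lt_or_gt_of_ne (hne x hx) with h | h
      · exact Or.inl h
      · exact Or.inr h
    rcases himg.subset_or_subset isOpen_Iio isOpen_Ioi
        (Set.disjoint_left.mpr (fun x h1 h2 => absurd (lt_trans h1 h2) (lt_irrefl x))) hcover with h | h
    · right; intro x hx; exact h ⟨x, hx, rfl⟩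
    · left; intro x hx; exact h ⟨x, hx, rfl⟩
  rcases hsign with hconv | hconc
  · -- convex case
    have hmono' : StrictMonoOn (deriv g) (Ioi a) :=
      strictMonoOn_of_deriv_pos (convex_Ioi a) hcont1 (by rw [interior_Ioi]; exact hconv)
    have hneg : ∀ x ∈ Ioi a, deriv g x < 0 := by
      intro x hx
      by_contra hge
      push_neg at hge
      refine subA x hx (fun y hy => ?_)
      rcases eq_or_lt_of_le (le_of_lt hy : x ≤ y) with rfl | hlt
      · exact hge
      · exact le_of_lt (lt_of_le_of_lt hge (hmono' hx (lt_trans hx hlt) hlt))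
    obtain ⟨K, hK⟩ : ∃ K : ℝ, K = -(deriv g (a + 1)) := ⟨_, rfl⟩
    have hKpos : 0 < K := by
      rw [hK]; linarith [hneg (a+1) (by simp : a + 1 ∈ Ioi a)]
    refine ⟨a + 1, K, by linarith, hKpos, ?_⟩
    intro z hz ω hω
    have hza : a < z := by linarith
    -- deriv g ≥ -K on Ici z
    have hge : ∀ x ∈ Ioi z, -K ≤ deriv g x := by
      intro x hx
      have hxa : x ∈ Ioi a := lt_trans hza hx
      have h1 : deriv g (a+1) ≤ deriv g x := by
        rcases eq_or_lt_of_le (le_trans hz (le_of_lt hx) : a + 1 ≤ x) with rfl | hlt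
        · exact le_refl _
        · exact le_of_lt (hmono' (by simp) hxa hlt)
      rw [hK]
      linarith
    -- u x = g x + K * x is monotone on Ici z
    have hsubz : Ici z ⊆ Ioi a := fun x hx => lt_of_lt_of_le hza hx
    have hmonu : MonotoneOn (fun x => g x + K * x) (Ici z) := by
      apply monotoneOn_of_deriv_nonneg (convex_Ici z)
      · exact (hcont.mono hsubz).add ((continuous_const.mul continuous_id).continuousOn)
      · intro x hx
        rw [interior_Ici] at hx
        exact ((hdiff x (hsubz (mem_Ici.mpr (le_of_lt (mem_Ioi.mp hx))))).add
          (differentiableAt_id.const_mul K)).differentiableWithinAt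
      · intro x hx
        rw [interior_Ici] at hx
        have hlin : HasDerivAt (fun y : ℝ => K * y) K x := by
          simpa using (hasDerivAt_id x).const_mul K
        rw [show deriv (fun x => g x + K * x) x = deriv g x + K from
          ((hdiff x (hsubz (mem_Ici.mpr (le_of_lt (mem_Ioi.mp hx))))).hasDerivAt.add hlin).deriv]
        linarith [hge x hx]
    obtain ⟨hω1, hω2⟩ := hω
    have h2 : g z + K * z ≤ g ω + K * ω :=
      hmonu (le_refl z : z ∈ Ici z) (hω1 : ω ∈ Ici z) hω1
    -- g z + K z ≤ g ω + K ω, so g ω ≥ g z - K (ω - z) ≥ g z - K * (g z/(2K)) = g z / 2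
    have hKω : K * (ω - z) ≤ g z / 2 := by
      have : ω - z ≤ g z / (2 * K) := by linarith
      calc K * (ω - z) ≤ K * (g z / (2 * K)) := by
            exact mul_le_mul_of_nonneg_left this (le_of_lt hKpos)
        _ = g z / 2 := by field_simp
    have hexp : K * (ω - z) = K * ω - K * z := by ring
    linarith [h2, hKω, hexp]
  · -- concave case : contradiction
    exfalso
    have hanti' : StrictAntiOn (deriv g) (Ioi a) :=
      strictAntiOn_of_deriv_neg (convex_Ioi a) hcont1 (by rw [interior_Ioi]; exact hconc)
    by_cases hall : ∀ x ∈ Ioi (a+1), 0 ≤ deriv g x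
    · exact subA (a+1) (by linarith) hall
    · push_neg at hall
      obtain ⟨x₂, hx₂, hx₂neg⟩ := hall
      have hx₂a : x₂ ∈ Ioi a := lt_trans (by linarith : a < a + 1) (mem_Ioi.mp hx₂)
      refine subB x₂ hx₂a hx₂neg (fun y hy => ?_)
      exact le_of_lt (hanti' hx₂a (mem_Ioi.mpr (lt_trans (mem_Ioi.mp hx₂a) (mem_Ioi.mp hy))) hy)
lemma stepB (φ : ℝ → ℝ)
    (hφ_pos : ∀ x : ℝ, 1 ≤ x → 0 < φ x)
    (hφ_nonneg : ∀ x : ℝ, 0 ≤ φ x)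
    (hInt : IntegrableOn φ (Set.Ici 1))
    (hφ0 : Tendsto φ atTop (nhds 0))
    (hφ_C2 : ContDiffOn ℝ 2 φ (Set.Ici 1))
    (μ : ℝ) (hμ0 : 0 < μ) (ω₀ : ℝ)
    (hω₀ : ∀ x : ℝ, ω₀ < x → deriv (deriv (fun t : ℝ => φ t ^ μ)) x ≠ 0) :
    ∃ c > 0, ∃ Z, 1 ≤ Z ∧ ∀ z, Z ≤ z →
      c * φ z ^ (1+μ) ≤ ∫ t in Set.Ioi z, φ t := by
  set a := max ω₀ 1 with ha
  set g : ℝ → ℝ := fun t => φ t ^ μ with hgdef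
  have ha1 : (1:ℝ) ≤ a := le_max_right _ _
  have hga : ContDiffOn ℝ 2 g (Set.Ioi a) := by
    intro x hx
    have hx1 : (1:ℝ) < x := lt_of_le_of_lt ha1 hx
    have hmem : Set.Ici (1:ℝ) ∈ nhds x :=
      mem_of_superset (isOpen_Ioi.mem_nhds hx1) Ioi_subset_Ici_self
    exact ((hφ_C2.contDiffAt hmem).rpow_const_of_ne
      (ne_of_gt (hφ_pos x hx1.le))).contDiffWithinAt
  have hgpos : ∀ x, a < x → 0 < g x := fun x hx =>
    Real.rpow_pos_of_pos (hφ_pos x (le_of_lt (lt_of_le_of_lt ha1 hx))) μ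
  have hg0 : Tendsto g atTop (nhds 0) := by
    have hc : ContinuousAt (fun y : ℝ => y ^ μ) 0 :=
      Real.continuousAt_rpow_const 0 μ (Or.inr (le_of_lt hμ0))
    have := hc.tendsto.comp hφ0
    rwa [Real.zero_rpow (ne_of_gt hμ0)] at this
  have hgne : ∀ x, a < x → deriv (deriv g) x ≠ 0 := fun x hx =>
    hω₀ x (lt_of_le_of_lt (le_max_left _ _) hx)
  obtain ⟨b, K, hab, hKpos, hmain⟩ := aux_convex g a hga hgpos hg0 hgne
  have hb1 : (1:ℝ) ≤ b := le_trans ha1 (le_of_lt hab)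
  have hCpos : (0:ℝ) < (2:ℝ) ^ (1/μ) := Real.rpow_pos_of_pos two_pos _
  refine ⟨(2*K*(2:ℝ)^(1/μ))⁻¹, inv_pos.mpr (by positivity), b, hb1, ?_⟩
  intro z hz
  have hz1 : (1:ℝ) ≤ z := le_trans hb1 hz
  have hφz := hφ_pos z hz1
  have hgz : 0 < g z := hgpos z (lt_of_lt_of_le hab hz)
  set h := g z / (2*K) with hh
  have hhpos : 0 < h := div_pos hgz (by positivity)
  set c₀ := (g z / 2) ^ (1/μ) with hc₀
  have hc₀pos : 0 < c₀ := Real.rpow_pos_of_pos (by positivity) _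
  have hIntIoi : IntegrableOn φ (Set.Ioi z) :=
    hInt.mono_set (fun t ht => le_trans hz1 (le_of_lt ht))
  have hIntIoc : IntegrableOn φ (Set.Ioc z (z+h)) :=
    hIntIoi.mono_set Ioc_subset_Ioi_self
  -- pointwise bound on Ioc
  have hpt : ∀ t ∈ Set.Ioc z (z+h), c₀ ≤ φ t := by
    intro t ht
    have h1 : g z / 2 ≤ g t := hmain z hz t ⟨ht.1.le, ht.2⟩
    have h2 : c₀ ≤ (g t) ^ (1/μ) :=
      Real.rpow_le_rpow (by positivity) h1 (by positivity)
    have h3 : (g t) ^ (1/μ) = φ t := by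
      have ht1 : (1:ℝ) ≤ t := le_trans hz1 ht.1.le
      rw [hgdef]
      rw [← Real.rpow_mul (hφ_nonneg t), mul_one_div_cancel (ne_of_gt hμ0),
        Real.rpow_one]
    rwa [h3] at h2
  have step2 : h * c₀ ≤ ∫ t in Set.Ioc z (z+h), φ t := by
    have hconst : ∫ _ in Set.Ioc z (z+h), c₀ = h * c₀ := by
      rw [setIntegral_const, measureReal_def, Real.volume_Ioc, smul_eq_mul,
        ENNReal.toReal_ofReal (by linarith : (0:ℝ) ≤ z + h - z)]
      ring_nf
    rw [← hconst]
    exact setIntegral_mono_on (integrableOn_const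
        (measure_Ioc_lt_top.ne)) hIntIoc measurableSet_Ioc hpt
  have step1 : ∫ t in Set.Ioc z (z+h), φ t ≤ ∫ t in Set.Ioi z, φ t := by
    apply setIntegral_mono_set hIntIoi
    · exact ae_of_all _ (fun t => hφ_nonneg t)
    · exact HasSubset.Subset.eventuallyLE Ioc_subset_Ioi_self
  -- algebra
  have halg : (2*K*(2:ℝ)^(1/μ))⁻¹ * φ z ^ (1+μ) = h * c₀ := by
    have e1 : c₀ = φ z / (2:ℝ)^(1/μ) := by
      rw [hc₀, hgdef]
      rw [Real.div_rpow (Real.rpow_nonneg (hφ_nonneg z) μ) (by norm_num)]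
      rw [← Real.rpow_mul (hφ_nonneg z), mul_one_div_cancel (ne_of_gt hμ0),
        Real.rpow_one]
    have e2 : φ z ^ (1+μ) = φ z * φ z ^ μ := by
      rw [Real.rpow_add hφz, Real.rpow_one]
    rw [e1, e2, hh, hgdef]
    field_simp
  rw [halg]
  exact le_trans step2 step1

lemma stepA (φ : ℝ → ℝ)
    (hφ_pos : ∀ x : ℝ, 1 ≤ x → 0 < φ x)
    (hφ_nonneg : ∀ x : ℝ, 0 ≤ φ x)
    (hInt : IntegrableOn φ (Set.Ici 1))
    (hφcont : ContinuousOn φ (Set.Ici 1))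
    (x₀ : ℝ) (hanti : StrictAntiOn φ (Set.Ici x₀))
    (hφ_decay : ∀ l : ℝ, 0 < l →
      Tendsto (fun x : ℝ => x ^ l * φ x) atTop (nhds 0))
    (ε : ℝ) (hε0 : 0 < ε) (hε1 : ε < 1) :
    ∃ C > 0, ∃ Z, 1 ≤ Z ∧ ∀ z, Z ≤ z →
      (∫ t in Set.Ioi z, φ t) ≤ C * φ z ^ (1-ε) := by
  set l := 2/ε with hl
  have hlpos : 0 < l := by positivity
  obtain ⟨N, hN⟩ := eventually_atTop.1
    ((hφ_decay l hlpos).eventually (gt_mem_nhds one_pos))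
  set z₁ := max N (max x₀ 2) with hz₁
  have hz₁2 : (2:ℝ) ≤ z₁ := le_trans (le_max_right _ _) (le_max_right _ _)
  have hz₁x₀ : x₀ ≤ z₁ := le_trans (le_max_left _ _) (le_max_right _ _)
  have hz₁pos : (0:ℝ) < z₁ := by linarith
  have hbound : ∀ x, z₁ ≤ x → φ x ≤ x ^ (-l) := by
    intro x hx
    have hxpos : (0:ℝ) < x := lt_of_lt_of_le hz₁pos hx
    have h1 : x ^ l * φ x < 1 := hN x (le_trans (le_max_left _ _) hx)
    have hxl : 0 < x ^ l := Real.rpow_pos_of_pos hxpos l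
    rw [Real.rpow_neg (le_of_lt hxpos), ← one_div]
    rw [le_div_iff₀ hxl]
    nlinarith [h1]
  have hIntε : IntegrableOn (fun t => φ t ^ ε) (Set.Ioi z₁) := by
    apply Integrable.mono' (g := fun t : ℝ => t ^ (-2:ℝ))
      (integrableOn_Ioi_rpow_of_lt (by norm_num) hz₁pos)
    · apply ContinuousOn.aestronglyMeasurable _ measurableSet_Ioi
      apply (hφcont.mono (fun t (ht : t ∈ Ioi z₁) => le_trans (by linarith : (1:ℝ) ≤ z₁) (le_of_lt (mem_Ioi.mp ht)))).rpow_const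
      intro t ht
      exact Or.inl (ne_of_gt (hφ_pos t (le_trans (by linarith) (le_of_lt ht))))
    · filter_upwards [ae_restrict_mem measurableSet_Ioi] with x hx
      have hx1 : z₁ ≤ x := le_of_lt hx
      rw [Real.norm_of_nonneg (Real.rpow_nonneg (hφ_nonneg x) ε)]
      calc φ x ^ ε ≤ (x ^ (-l)) ^ ε :=
            Real.rpow_le_rpow (hφ_nonneg x) (hbound x hx1) (le_of_lt hε0)
        _ = x ^ ((-l)*ε) := by
            rw [← Real.rpow_mul (by linarith : (0:ℝ) ≤ x)]
        _ = x ^ (-2:ℝ) := by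
            congr 1
            rw [hl]
            field_simp
  set C := (∫ t in Set.Ioi z₁, φ t ^ ε) + 1 with hC
  have hC0 : 0 ≤ ∫ t in Set.Ioi z₁, φ t ^ ε :=
    setIntegral_nonneg measurableSet_Ioi (fun t _ => Real.rpow_nonneg (hφ_nonneg t) ε)
  refine ⟨C, by linarith, z₁, by linarith, ?_⟩
  intro z hz
  have hz1 : (1:ℝ) ≤ z := by linarith
  have hφz := hφ_pos z hz1
  have hIntIoi : IntegrableOn φ (Set.Ioi z) :=
    hInt.mono_set (fun t ht => le_trans hz1 (le_of_lt ht))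
  have hIntε' : IntegrableOn (fun t => φ t ^ ε) (Set.Ioi z) :=
    hIntε.mono_set (Ioi_subset_Ioi hz)
  calc (∫ t in Set.Ioi z, φ t)
      ≤ ∫ t in Set.Ioi z, φ z ^ (1-ε) * φ t ^ ε := by
        apply setIntegral_mono_on hIntIoi (hIntε'.const_mul _) measurableSet_Ioi
        intro t ht
        have ht1 : (1:ℝ) ≤ t := le_trans hz1 (le_of_lt ht)
        have hφt := hφ_pos t ht1
        have e : φ t = φ t ^ (1-ε) * φ t ^ ε := by
          rw [← Real.rpow_add hφt]
          norm_num
        nth_rewrite 1 [e]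
        apply mul_le_mul_of_nonneg_right _ (Real.rpow_nonneg (hφ_nonneg t) ε)
        apply Real.rpow_le_rpow (hφ_nonneg t) _ (by linarith)
        exact le_of_lt (hanti (le_trans hz₁x₀ hz) (le_trans (le_trans hz₁x₀ hz) (le_of_lt ht)) ht)
    _ = φ z ^ (1-ε) * ∫ t in Set.Ioi z, φ t ^ ε := integral_const_mul _ _
    _ ≤ φ z ^ (1-ε) * C := by
        apply mul_le_mul_of_nonneg_left _ (Real.rpow_nonneg (hφ_nonneg z) _)
        have : (∫ t in Set.Ioi z, φ t ^ ε) ≤ ∫ t in Set.Ioi z₁, φ t ^ ε := by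
          apply setIntegral_mono_set hIntε
          · exact ae_of_all _ (fun t => Real.rpow_nonneg (hφ_nonneg t) ε)
          · exact HasSubset.Subset.eventuallyLE (Ioi_subset_Ioi hz)
        linarith
    _ = C * φ z ^ (1-ε) := mul_comm _ _

/-- Under the regularity assumptions on the density `φ` (C², positive on `[1,∞)`, eventually
strictly decreasing, faster than polynomial decay, eventually nonvanishing second derivative
of `φ^μ` for `0 < |μ| ≤ 1`), the density and its tail `F*(z) = ∫_z^∞ φ` have the same
logarithmic decay: `log φ(z) / log F*(z) → 1` as `z → ∞`. -/
theorem stmt_3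
    (φ : ℝ → ℝ)
    (hφ_supp : ∀ x : ℝ, x < 1 → φ x = 0)
    (hφ_pos : ∀ x : ℝ, 1 ≤ x → 0 < φ x)
    (hφ_int : ∫ x in Set.Ici (1 : ℝ), φ x = 1)
    (hφ_C2 : ContDiffOn ℝ 2 φ (Set.Ici 1))
    (hφ_anti : ∃ x₀ : ℝ, StrictAntiOn φ (Set.Ici x₀))
    (hφ_decay : ∀ l : ℝ, 0 < l →
      Tendsto (fun x : ℝ => x ^ l * φ x) atTop (nhds 0))
    (hφ_mu : ∀ μ : ℝ, μ ≠ 0 → |μ| ≤ 1 → ∃ ω₀ : ℝ, ∀ x : ℝ, ω₀ < x →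
      deriv (deriv (fun t : ℝ => φ t ^ μ)) x ≠ 0) :
    Tendsto
      (fun z : ℝ => Real.log (φ z) / Real.log (∫ t in Set.Ioi z, φ t))
      atTop (nhds 1) := by
  have hIntφ : IntegrableOn φ (Set.Ici 1) := by
    by_contra h
    rw [integral_undef h] at hφ_int
    norm_num at hφ_int
  have hφ_nonneg : ∀ x : ℝ, 0 ≤ φ x := by
    intro x
    rcases lt_or_ge x 1 with h | h
    · rw [hφ_supp x h]
    · exact le_of_lt (hφ_pos x h)
  have hφ0 : Tendsto φ atTop (nhds 0) := by
    have h1 := hφ_decay 1 one_pos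
    apply tendsto_of_tendsto_of_tendsto_of_le_of_le' tendsto_const_nhds h1
    · exact Eventually.of_forall (fun x => hφ_nonneg x)
    · filter_upwards [eventually_ge_atTop (1:ℝ)] with x hx
      calc φ x = 1 * φ x := (one_mul _).symm
        _ ≤ x ^ (1:ℝ) * φ x := by
            rw [Real.rpow_one]
            exact mul_le_mul_of_nonneg_right hx (hφ_nonneg x)
  have hlogφ : Tendsto (fun z => -Real.log (φ z)) atTop atTop := by
    have h1 : Tendsto φ atTop (nhdsWithin 0 (Set.Ioi 0)) := by
      rw [tendsto_nhdsWithin_iff]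
      refine ⟨hφ0, ?_⟩
      filter_upwards [eventually_ge_atTop (1:ℝ)] with x hx
      exact hφ_pos x hx
    exact tendsto_neg_atBot_atTop.comp (Real.tendsto_log_nhdsGT_zero.comp h1)
  obtain ⟨x₀, hanti⟩ := hφ_anti
  have key : Tendsto (fun z => Real.log (∫ t in Set.Ioi z, φ t) / Real.log (φ z))
      atTop (nhds 1) := by
    rw [Metric.tendsto_atTop]
    intro ε₀ hε₀
    set ε := min (ε₀/4) (1/2) with hε
    have hε0 : 0 < ε := lt_min (by linarith) (by norm_num)
    have hε1 : ε < 1 := lt_of_le_of_lt (min_le_right _ _) (by norm_num)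
    have hεε₀ : 2*ε < ε₀ := by
      have h := min_le_left (ε₀/4) (1/2)
      have : ε ≤ ε₀/4 := h
      linarith
    obtain ⟨ω₀, hω₀⟩ := hφ_mu ε (ne_of_gt hε0) (by rw [abs_of_pos hε0]; linarith)
    obtain ⟨C, hCpos, Z₁, hZ₁1, hA⟩ :=
      stepA φ hφ_pos hφ_nonneg hIntφ hφ_C2.continuousOn x₀ hanti hφ_decay ε hε0 hε1
    obtain ⟨c, hcpos, Z₂, hZ₂1, hB⟩ :=
      stepB φ hφ_pos hφ_nonneg hIntφ hφ0 hφ_C2 ε hε0 ω₀ hω₀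
    set R := (|Real.log C| + |Real.log c|)/ε + 1 with hR
    obtain ⟨N₁, hN₁⟩ := eventually_atTop.1 (hlogφ.eventually_ge_atTop R)
    refine ⟨max (max Z₁ Z₂) (max N₁ 1), ?_⟩
    intro z hzN
    have hzZ₁ : Z₁ ≤ z := le_trans (le_trans (le_max_left _ _) (le_max_left _ _)) hzN
    have hzZ₂ : Z₂ ≤ z := le_trans (le_trans (le_max_right _ _) (le_max_left _ _)) hzN
    have hzN₁ : N₁ ≤ z := le_trans (le_trans (le_max_left _ _) (le_max_right _ _)) hzN
    have hz1 : (1:ℝ) ≤ z := le_trans (le_trans (le_max_right _ _) (le_max_right _ _)) hzN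
    have hφz := hφ_pos z hz1
    set F := ∫ t in Set.Ioi z, φ t with hF
    have hFlow := hB z hzZ₂
    have hFpos : 0 < F := lt_of_lt_of_le (by positivity) hFlow
    have hFup := hA z hzZ₁
    set L := -Real.log (φ z) with hLdef
    have hlφ : Real.log (φ z) = -L := by rw [hLdef]; ring
    have hLR : R ≤ L := hN₁ z hzN₁
    have hL1 : 1 ≤ L := by
      have h0 : 0 ≤ (|Real.log C| + |Real.log c|)/ε := by positivity
      have : R ≥ 1 := by rw [hR]; linarith
      linarith
    have hLpos : 0 < L := by linarith
    have habs : |Real.log C| + |Real.log c| ≤ ε * L := by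
      have h1 : (|Real.log C| + |Real.log c|)/ε ≤ L := by
        rw [hR] at hLR; linarith
      calc |Real.log C| + |Real.log c|
          = ((|Real.log C| + |Real.log c|)/ε)*ε := by field_simp
        _ ≤ L*ε := mul_le_mul_of_nonneg_right h1 (le_of_lt hε0)
        _ = ε*L := mul_comm _ _
    have hlog1 : Real.log F ≤ Real.log C + (1-ε) * Real.log (φ z) := by
      calc Real.log F ≤ Real.log (C * φ z ^ (1-ε)) := Real.log_le_log hFpos hFup
        _ = Real.log C + (1-ε) * Real.log (φ z) := by
            rw [Real.log_mul (ne_of_gt hCpos)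
              (ne_of_gt (Real.rpow_pos_of_pos hφz _)), Real.log_rpow hφz]
    have hlog2 : Real.log c + (1+ε) * Real.log (φ z) ≤ Real.log F := by
      calc Real.log c + (1+ε)*Real.log (φ z)
          = Real.log (c * φ z ^ (1+ε)) := by
            rw [Real.log_mul (ne_of_gt hcpos)
              (ne_of_gt (Real.rpow_pos_of_pos hφz _)), Real.log_rpow hφz]
        _ ≤ Real.log F := Real.log_le_log (by positivity) hFlow
    rw [hlφ] at hlog1 hlog2
    set M := -Real.log F with hMdef
    have hM1 : M ≤ (1+2*ε) * L := by
      have e1 : (1+2*ε)*L = L + 2*(ε*L) := by ring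
      have h2 : -Real.log c ≤ |Real.log c| := neg_le_abs _
      have h3 : 0 ≤ |Real.log C| := abs_nonneg _
      have e2 : (1+ε)*(-L) = -L - ε*L := by ring
      rw [e2] at hlog2
      rw [hMdef, e1]
      linarith
    have hM2 : (1-2*ε) * L ≤ M := by
      have e1 : (1-2*ε)*L = L - 2*(ε*L) := by ring
      have h2 : Real.log C ≤ |Real.log C| := le_abs_self _
      have h3 : 0 ≤ |Real.log c| := abs_nonneg _
      have e2 : (1-ε)*(-L) = -L + ε*L := by ring
      rw [e2] at hlog1
      rw [e1]
      linarith
    have hdivle : M / L ≤ 1 + 2*ε := by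
      rw [div_le_iff₀ hLpos]
      linarith [hM1]
    have hdivge : 1 - 2*ε ≤ M / L := by
      rw [le_div_iff₀ hLpos]
      linarith [hM2]
    have heq : Real.log F / Real.log (φ z) = M / L := by
      rw [hlφ, hMdef, div_neg, neg_div]
    rw [Real.dist_eq, heq]
    rw [abs_lt]
    constructor <;> linarith
  have final := key.inv₀ one_ne_zero
  simp only [inv_div, inv_one] at final
  exact final
end

section
/- Let φ satisfy the regularity assumptions: φ is C² and strictly positive on [1,∞), eventually strictly decreasing, φ decays faster than any power (ω^l·φ(ω) → 0 as ω → ∞ for every l > 0), and for every μ with 0 < |μ| ≤ 1 there is ω₀(μ) such that the second derivative of φ^μ has no zero on (ω₀(μ),∞). Write φ = e^{−g}, so g = −ln φ is eventually strictly increasing with g(x)/ln x → ∞. Then the negative logarithmic derivative of φ is subexponential relative to g: for every μ > 0 there is x₀(μ) such that e^{−μ g(x)} < 1/g'(x) < e^{μ g(x)} for all x > x₀(μ). Equivalently, −φ(x)/Dφ(x) = φ(x)^{o_x(1)} as x → ∞ (Appendix lemma). -/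
open MeasureTheory Filter

/-- Linear upper bound from a derivative bound. -/
lemma lin_upper {f : ℝ → ℝ} {c M : ℝ}
    (hd : ∀ x ∈ Set.Ici c, DifferentiableAt ℝ f x)
    (hM : ∀ x ∈ Set.Ici c, deriv f x ≤ M) :
    ∀ x ∈ Set.Ici c, f x ≤ f c + M * (x - c) := by
  have hdh : ∀ x ∈ Set.Ici c, DifferentiableAt ℝ (fun y => f y - M * y) x := by
    intro x hx
    exact (hd x hx).sub ((differentiableAt_fun_id).const_mul M)
  have hA : AntitoneOn (fun y => f y - M * y) (Set.Ici c) := by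
    apply antitoneOn_of_deriv_nonpos (convex_Ici c)
    · exact fun x hx => (hdh x hx).continuousAt.continuousWithinAt
    · intro x hx
      rw [interior_Ici] at hx
      exact (hdh x (Set.mem_Ici.mpr (le_of_lt (Set.mem_Ioi.mp hx)))).differentiableWithinAt
    · intro x hx
      rw [interior_Ici] at hx
      have hx' : x ∈ Set.Ici c := Set.mem_Ici.mpr (le_of_lt (Set.mem_Ioi.mp hx))
      have : deriv (fun y => f y - M * y) x = deriv f x - M := by
        rw [deriv_fun_sub (hd x hx') ((differentiableAt_fun_id).const_mul M)]
        have : deriv (fun y : ℝ => M * y) x = M := by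
          rw [deriv_const_mul _ differentiableAt_fun_id]
          simp
        rw [this]
      rw [this]
      linarith [hM x hx']
  intro x hx
  have := hA (Set.mem_Ici.mpr le_rfl) hx hx
  simp only at this
  linarith

/-- If `f` grows superlinearly but has derivative bounded above on a tail, contradiction. -/
lemma superlin_contra {χ : ℝ → ℝ} {a c₀ M : ℝ} (ha : 1 ≤ a) (hc₀ : a < c₀)
    (hgrow : ∀ x ∈ Set.Ioi a, x * x ≤ χ x)
    (hd : ∀ x ∈ Set.Ici c₀, DifferentiableAt ℝ χ x)
    (hM : ∀ x ∈ Set.Ici c₀, deriv χ x ≤ M) : False := by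
  have hlin := lin_upper hd hM
  set B : ℝ := |χ c₀| + |M| + |M| * c₀ + 1 with hB
  have hc₀pos : 0 < c₀ := by linarith
  have hB1 : 1 ≤ B := by
    have := abs_nonneg (χ c₀); have := abs_nonneg M
    nlinarith
  set x : ℝ := max c₀ B with hxdef
  have hxc : x ∈ Set.Ici c₀ := Set.mem_Ici.mpr (le_max_left _ _)
  have hxB : B ≤ x := le_max_right _ _
  have hx1 : 1 ≤ x := le_trans hB1 hxB
  have hcx : c₀ ≤ x := hxc
  have h1 := hlin x hxc
  have h2 := hgrow x (by simp only [Set.mem_Ioi]; linarith)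
  have hBx : B * x ≤ x * x := by nlinarith
  have : B * x ≥ |χ c₀| + |M| * x + |M| * c₀ + 1 := by
    nlinarith [abs_nonneg (χ c₀), abs_nonneg M, mul_nonneg (abs_nonneg (χ c₀)) (by linarith : (0:ℝ) ≤ x - 1),
      mul_nonneg (mul_nonneg (abs_nonneg M) hc₀pos.le) (by linarith : (0:ℝ) ≤ x - 1)]
  nlinarith [le_abs_self (χ c₀), le_abs_self M, neg_abs_le M, abs_nonneg M,
    mul_le_mul_of_nonneg_right (le_abs_self M) (by linarith : (0:ℝ) ≤ x)]

/-- Key lemma B : a superlinearly growing function with second derivative of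
constant sign eventually has derivative larger than any given bound. -/
lemma keyB {χ : ℝ → ℝ} {a ε : ℝ} (ha : 1 ≤ a)
    (hgrow : ∀ x ∈ Set.Ioi a, x * x ≤ χ x)
    (hd1 : ∀ x ∈ Set.Ioi a, DifferentiableAt ℝ χ x)
    (hd2 : ∀ x ∈ Set.Ioi a, DifferentiableAt ℝ (deriv χ) x)
    (hne : ∀ x ∈ Set.Ioi a, deriv (deriv χ) x ≠ 0) :
    ∃ c, a < c ∧ ∀ x ∈ Set.Ioi c, ε < deriv χ x := by
  have hdarboux := hasDerivWithinAt_forall_lt_or_forall_gt_of_forall_ne (convex_Ioi a)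
    (f := deriv χ) (f' := deriv (deriv χ))
    (fun x hx => ((hd2 x hx).hasDerivAt).hasDerivWithinAt) (m := 0) hne
  rcases hdarboux with hneg | hpos
  · -- second derivative negative: deriv χ strictly antitone, linear growth, contra
    exfalso
    have hanti : StrictAntiOn (deriv χ) (Set.Ioi a) := by
      apply strictAntiOn_of_deriv_neg (convex_Ioi a)
      · exact fun x hx => (hd2 x hx).continuousAt.continuousWithinAt
      · intro x hx
        rw [interior_Ioi] at hx
        exact hneg x hx
    refine superlin_contra ha (by linarith : a < a + 1) hgrow
      (fun x hx => hd1 x (by simp only [Set.mem_Ioi]; have := hx.out; linarith))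
      (M := deriv χ (a + 1)) ?_
    intro x hx
    have hx' : a + 1 ≤ x := hx
    rcases eq_or_lt_of_le hx' with h | h
    · rw [← h]
    · exact (hanti (by simp only [Set.mem_Ioi]; linarith)
        (by simp only [Set.mem_Ioi]; linarith) h).le
  · -- second derivative positive: deriv χ strictly monotone
    have hmono : StrictMonoOn (deriv χ) (Set.Ioi a) := by
      apply strictMonoOn_of_deriv_pos (convex_Ioi a)
      · exact fun x hx => (hd2 x hx).continuousAt.continuousWithinAt
      · intro x hx
        rw [interior_Ioi] at hx
        exact hpos x hx
    have hexists : ∃ b ∈ Set.Ioi a, ε < deriv χ b := by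
      by_contra hcon
      push_neg at hcon
      refine superlin_contra ha (by linarith : a < a + 1) hgrow
        (fun x hx => hd1 x (by simp only [Set.mem_Ioi]; have := hx.out; linarith)) (M := ε) ?_
      intro x hx
      exact hcon x (by simp only [Set.mem_Ioi]; have := hx.out; linarith)
    obtain ⟨b, hb, hbε⟩ := hexists
    exact ⟨b, hb, fun x hx => lt_trans hbε
      (hmono hb (lt_trans hb.out hx.out) hx.out)⟩

/-- Key lemma A : a positive, eventually strictly decreasing function whose second
derivative has constant sign eventually has small negative derivative. -/
lemma keyA {ψ : ℝ → ℝ} {a ε : ℝ} (ha : 1 ≤ a) (hε : 0 < ε)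
    (hψpos : ∀ x ∈ Set.Ioi a, 0 < ψ x)
    (hanti : StrictAntiOn ψ (Set.Ioi a))
    (hd1 : ∀ x ∈ Set.Ioi a, DifferentiableAt ℝ ψ x)
    (hd2 : ∀ x ∈ Set.Ioi a, DifferentiableAt ℝ (deriv ψ) x)
    (hne : ∀ x ∈ Set.Ioi a, deriv (deriv ψ) x ≠ 0) :
    ∃ c, a < c ∧ ∀ x ∈ Set.Ioi c, -ε < deriv ψ x ∧ deriv ψ x < 0 := by
  have hdarboux := hasDerivWithinAt_forall_lt_or_forall_gt_of_forall_ne (convex_Ioi a)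
    (f := deriv ψ) (f' := deriv (deriv ψ))
    (fun x hx => ((hd2 x hx).hasDerivAt).hasDerivWithinAt) (m := 0) hne
  rcases hdarboux with hneg | hpos
  · -- second derivative negative : deriv ψ strictly antitone, contradiction
    exfalso
    have hanti' : StrictAntiOn (deriv ψ) (Set.Ioi a) := by
      apply strictAntiOn_of_deriv_neg (convex_Ioi a)
      · exact fun x hx => (hd2 x hx).continuousAt.continuousWithinAt
      · intro x hx; rw [interior_Ioi] at hx; exact hneg x hx
    obtain ⟨c, hceq⟩ : ∃ c : ℝ, c = a + 1 := ⟨_, rfl⟩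
    have hcmem : c ∈ Set.Ioi a := by simp only [Set.mem_Ioi]; linarith
    obtain ⟨M, hMdef⟩ : ∃ M : ℝ, deriv ψ c = M := ⟨_, rfl⟩
    rcases lt_or_ge M 0 with hM | hM
    · -- deriv ψ c < 0 : ψ goes to -∞
      have hMle : ∀ x ∈ Set.Ici c, deriv ψ x ≤ M := by
        intro x hx
        rcases eq_or_lt_of_le hx.out with h | h
        · rw [← h, hMdef]
        · rw [← hMdef]
          exact (hanti' hcmem (by simp only [Set.mem_Ioi]; linarith) h).le
      have hlin := lin_upper (fun x hx => hd1 x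
        (by simp only [Set.mem_Ioi]; have := hx.out; linarith)) hMle
      obtain ⟨x, hx1, hx2⟩ : ∃ x : ℝ, c ≤ x ∧ c + ψ c / (-M) + 1 ≤ x :=
        ⟨max c (c + ψ c / (-M) + 1), le_max_left _ _, le_max_right _ _⟩
      have h1 := hlin x hx1
      have h2 := hψpos x (by simp only [Set.mem_Ioi]; linarith)
      have hψc := hψpos c hcmem
      have hkey : M * (x - c) ≤ M * (ψ c / (-M) + 1) :=
        mul_le_mul_of_nonpos_left (by linarith) hM.le
      have hMne : M ≠ 0 := ne_of_lt hM
      have heq : M * (ψ c / (-M) + 1) = -ψ c + M := by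
        rw [div_neg, mul_add, mul_one, mul_neg, mul_div_cancel₀ _ hMne]
      linarith
    · -- deriv ψ c ≥ 0 : ψ increasing on (a, c), contradicting strict antitonicity
      have hmono : StrictMonoOn ψ (Set.Icc (a + 1/2) c) := by
        apply strictMonoOn_of_deriv_pos (convex_Icc _ _)
        · intro x hx
          exact (hd1 x (by simp only [Set.mem_Ioi]; have := hx.1; linarith)).continuousAt.continuousWithinAt
        · intro x hx
          rw [interior_Icc] at hx
          calc (0:ℝ) ≤ M := hM
          _ = deriv ψ c := hMdef.symm
          _ < deriv ψ x := by
              have := hanti' (by simp only [Set.mem_Ioi]; have := hx.1; linarith : x ∈ Set.Ioi a) hcmem hx.2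
              linarith
      have h1 : ψ (a + 1/2) < ψ c :=
        hmono (by constructor <;> [linarith; linarith]) (by constructor <;> linarith) (by linarith)
      have h2 : ψ c < ψ (a + 1/2) :=
        hanti (by simp only [Set.mem_Ioi]; linarith) hcmem (by linarith)
      linarith
  · -- second derivative positive : deriv ψ strictly monotone
    have hmono' : StrictMonoOn (deriv ψ) (Set.Ioi a) := by
      apply strictMonoOn_of_deriv_pos (convex_Ioi a)
      · exact fun x hx => (hd2 x hx).continuousAt.continuousWithinAt
      · intro x hx; rw [interior_Ioi] at hx; exact hpos x hx
    have hneg' : ∀ x ∈ Set.Ioi a, deriv ψ x < 0 := by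
      intro b hb
      by_contra hcon
      push_neg at hcon
      have hpos' : ∀ x ∈ Set.Ioo b (b + 1), 0 < deriv ψ x := by
        intro x hx
        calc (0:ℝ) ≤ deriv ψ b := hcon
        _ < deriv ψ x := hmono' hb (lt_trans hb.out hx.1) hx.1
      have hmono2 : StrictMonoOn ψ (Set.Icc b (b + 1)) := by
        apply strictMonoOn_of_deriv_pos (convex_Icc _ _)
        · intro x hx
          exact (hd1 x (by simp only [Set.mem_Ioi]; have := hx.1; have := hb.out; linarith)).continuousAt.continuousWithinAt
        · intro x hx
          rw [interior_Icc] at hx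
          exact hpos' x hx
      have hb2 : b + 1/2 ∈ Set.Icc b (b + 1) := by constructor <;> linarith
      have hb3 : b + 1 ∈ Set.Icc b (b + 1) := by constructor <;> linarith
      have h1 : ψ (b + 1/2) < ψ (b + 1) := hmono2 hb2 hb3 (by linarith)
      have h2 : ψ (b + 1) < ψ (b + 1/2) :=
        hanti (by simp only [Set.mem_Ioi]; have := hb.out; linarith)
          (by simp only [Set.mem_Ioi]; have := hb.out; linarith) (by linarith)
      linarith
    have hexists : ∃ b ∈ Set.Ioi a, -ε < deriv ψ b := by
      by_contra hcon
      push_neg at hcon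
      obtain ⟨c, hceq⟩ : ∃ c : ℝ, c = a + 1 := ⟨_, rfl⟩
      have hMle : ∀ x ∈ Set.Ici c, deriv ψ x ≤ -ε := fun x hx =>
        hcon x (by simp only [Set.mem_Ioi]; have := hx.out; linarith)
      have hlin := lin_upper (fun x hx => hd1 x
        (by simp only [Set.mem_Ioi]; have := hx.out; linarith)) hMle
      have hψc := hψpos c (by simp only [Set.mem_Ioi]; linarith)
      obtain ⟨x, hx1, hx2⟩ : ∃ x : ℝ, c ≤ x ∧ c + ψ c / ε + 1 ≤ x :=
        ⟨max c (c + ψ c / ε + 1), le_max_left _ _, le_max_right _ _⟩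
      have h1 := hlin x hx1
      have h2 := hψpos x (by simp only [Set.mem_Ioi]; linarith)
      have hkey : -ε * (x - c) ≤ -ε * (ψ c / ε + 1) :=
        mul_le_mul_of_nonpos_left (by linarith) (by linarith)
      have heq : -ε * (ψ c / ε + 1) = -ψ c + -ε := by
        have hεne : ε ≠ 0 := ne_of_gt hε
        field_simp
        ring
      linarith
    obtain ⟨b, hb, hbε⟩ := hexists
    refine ⟨b, hb.out, fun x hx => ⟨lt_trans hbε (hmono' hb (lt_trans hb.out hx.out) hx.out),
      hneg' x (by simp only [Set.mem_Ioi]; have := hb.out; have := hx.out; linarith)⟩⟩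

set_option maxHeartbeats 1000000 in
/-- **Appendix lemma.** Under the regularity assumptions on `φ`, writing `φ = e^{-g}` with
`g = -log φ`, the negative logarithmic derivative of `φ` is subexponential relative to `g`:
for every `μ > 0` there is `x₀(μ)` with `e^{-μ g(x)} < 1/g'(x) < e^{μ g(x)}` for all
`x > x₀(μ)`; equivalently `-φ(x)/Dφ(x) = φ(x)^{o_x(1)}`. -/
theorem stmt_4
    (φ : ℝ → ℝ)
    (hφ_supp : ∀ x : ℝ, x < 1 → φ x = 0)
    (hφ_pos : ∀ x : ℝ, 1 ≤ x → 0 < φ x)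
    (hφ_int : ∫ x in Set.Ici (1 : ℝ), φ x = 1)
    (hφ_C2 : ContDiffOn ℝ 2 φ (Set.Ici 1))
    (hφ_anti : ∃ x₀ : ℝ, StrictAntiOn φ (Set.Ici x₀))
    (hφ_decay : ∀ l : ℝ, 0 < l →
      Tendsto (fun x : ℝ => x ^ l * φ x) atTop (nhds 0))
    (hφ_mu : ∀ μ : ℝ, μ ≠ 0 → |μ| ≤ 1 → ∃ ω₀ : ℝ, ∀ x : ℝ, ω₀ < x →
      deriv (deriv (fun t : ℝ => φ t ^ μ)) x ≠ 0)
    (g : ℝ → ℝ) (hg : g = fun x => -Real.log (φ x)) :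
    ∀ μ : ℝ, 0 < μ → ∃ x₀ : ℝ, ∀ x : ℝ, x₀ < x →
      Real.exp (-μ * g x) < 1 / deriv g x ∧ 1 / deriv g x < Real.exp (μ * g x) := by
  intro μ hμ
  -- basic smoothness facts
  have hCA : ∀ x : ℝ, 1 < x → ContDiffAt ℝ 2 φ x :=
    fun x hx => hφ_C2.contDiffAt (Ici_mem_nhds hx)
  have hφdiff : ∀ x : ℝ, 1 < x → DifferentiableAt ℝ φ x :=
    fun x hx => (hCA x hx).differentiableAt two_ne_zero
  -- reduce to ν := min μ 1
  obtain ⟨ν, hνdef⟩ : ∃ ν : ℝ, ν = min μ 1 := ⟨_, rfl⟩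
  have hν0 : 0 < ν := hνdef ▸ lt_min hμ one_pos
  have hν1 : ν ≤ 1 := hνdef ▸ min_le_right _ _
  have hνμ : ν ≤ μ := hνdef ▸ min_le_left _ _
  -- smoothness of powers of φ
  have hkey : ∀ p : ℝ, ∀ x : ℝ, 1 < x →
      DifferentiableAt ℝ (fun t => φ t ^ p) x ∧
      DifferentiableAt ℝ (deriv (fun t => φ t ^ p)) x := by
    intro p
    have hOn : ContDiffOn ℝ 2 (fun t => φ t ^ p) (Set.Ioi (1:ℝ)) := by
      intro x hx
      exact ((hCA x hx).rpow_const_of_ne (ne_of_gt (hφ_pos x hx.out.le))).contDiffWithinAt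
    have h2 : (2 : WithTop ℕ∞) = 1 + 1 := by norm_num
    rw [h2, contDiffOn_succ_iff_deriv_of_isOpen isOpen_Ioi] at hOn
    obtain ⟨hdiff, -, hder⟩ := hOn
    intro x hx
    exact ⟨(hdiff x hx).differentiableAt (Ioi_mem_nhds hx),
      ((hder.differentiableOn one_ne_zero) x hx).differentiableAt (Ioi_mem_nhds hx)⟩
  -- derivative formula for powers of φ
  have hderiv : ∀ p : ℝ, ∀ x : ℝ, 1 < x →
      deriv (fun t => φ t ^ p) x = deriv φ x * p * φ x ^ (p - 1) :=
    fun p x hx => (((hφdiff x hx).hasDerivAt).rpow_const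
      (Or.inl (ne_of_gt (hφ_pos x hx.le)))).deriv
  obtain ⟨x₀, hx₀⟩ := hφ_anti
  obtain ⟨ω₁, hω₁⟩ := hφ_mu ν (ne_of_gt hν0) (by rw [abs_of_pos hν0]; exact hν1)
  obtain ⟨ω₂, hω₂⟩ := hφ_mu (-ν) (by simp [ne_of_gt hν0])
    (by rw [abs_neg, abs_of_pos hν0]; exact hν1)
  -- polynomial decay thresholds
  have hdec := ((hφ_decay (2/ν) (by positivity)).eventually_lt_const
    (by norm_num : (0:ℝ) < 1)).exists_forall_of_atTop
  obtain ⟨N, hN⟩ := hdec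
  have hsm := ((hφ_decay 1 one_pos).eventually_lt_const
    (by norm_num : (0:ℝ) < 1)).exists_forall_of_atTop
  obtain ⟨N₂, hN₂⟩ := hsm
  -- Part A : ψ = φ ^ ν
  obtain ⟨aA, haAdef⟩ : ∃ aA : ℝ, aA = max (max x₀ ω₁) 1 := ⟨_, rfl⟩
  have haA1 : (1:ℝ) ≤ aA := haAdef ▸ le_max_right _ _
  have haAx₀ : x₀ ≤ aA := haAdef ▸ le_trans (le_max_left _ _) (le_max_left _ _)
  have haAω₁ : ω₁ ≤ aA := haAdef ▸ le_trans (le_max_right _ _) (le_max_left _ _)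
  have hA := keyA (ψ := fun t => φ t ^ ν) (a := aA) (ε := ν) haA1 hν0
    (fun x hx => Real.rpow_pos_of_pos (hφ_pos x (le_trans haA1 hx.out.le)) ν)
    (by
      intro x hx y hy hxy
      have h1 : (0:ℝ) ≤ φ y := (hφ_pos y (le_trans haA1 hy.out.le)).le
      have h2 : φ y < φ x := hx₀ (le_trans haAx₀ hx.out.le) (le_trans haAx₀ hy.out.le) hxy
      exact Real.rpow_lt_rpow h1 h2 hν0)
    (fun x hx => (hkey ν x (lt_of_le_of_lt haA1 hx.out)).1)
    (fun x hx => (hkey ν x (lt_of_le_of_lt haA1 hx.out)).2)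
    (fun x hx => hω₁ x (lt_of_le_of_lt haAω₁ hx.out))
  obtain ⟨c₁, hc₁a, hc₁⟩ := hA
  -- Part B : χ = φ ^ (-ν)
  obtain ⟨aB, haBdef⟩ : ∃ aB : ℝ, aB = max (max N ω₂) 1 := ⟨_, rfl⟩
  have haB1 : (1:ℝ) ≤ aB := haBdef ▸ le_max_right _ _
  have haBN : N ≤ aB := haBdef ▸ le_trans (le_max_left _ _) (le_max_left _ _)
  have haBω₂ : ω₂ ≤ aB := haBdef ▸ le_trans (le_max_right _ _) (le_max_left _ _)
  have hB := keyB (χ := fun t => φ t ^ (-ν)) (a := aB) (ε := ν) haB1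
    (by
      intro x hx
      have hx1 : (1:ℝ) < x := lt_of_le_of_lt haB1 hx.out
      have hx0 : (0:ℝ) < x := lt_trans one_pos hx1
      have hφp : 0 < φ x := hφ_pos x hx1.le
      have h1 : x ^ ((2:ℝ)/ν) * φ x < 1 := hN x (le_of_lt (lt_of_le_of_lt haBN hx.out))
      have hxp : (0:ℝ) < x ^ ((2:ℝ)/ν) := Real.rpow_pos_of_pos hx0 _
      have h2 : φ x < x ^ (-((2:ℝ)/ν)) := by
        rw [Real.rpow_neg hx0.le, ← one_div, lt_div_iff₀ hxp, mul_comm]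
        exact h1
      have h3 : (x ^ (-((2:ℝ)/ν))) ^ (-ν) < φ x ^ (-ν) :=
        Real.rpow_lt_rpow_of_neg hφp h2 (neg_lt_zero.mpr hν0)
      have h4 : (x ^ (-((2:ℝ)/ν))) ^ (-ν) = x * x := by
        rw [← Real.rpow_mul hx0.le]
        have : -((2:ℝ)/ν) * (-ν) = 2 := by field_simp
        rw [this, show (2:ℝ) = ((2:ℕ):ℝ) by norm_num, Real.rpow_natCast]
        ring
      rw [h4] at h3
      exact h3.le)
    (fun x hx => (hkey (-ν) x (lt_of_le_of_lt haB1 hx.out)).1)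
    (fun x hx => (hkey (-ν) x (lt_of_le_of_lt haB1 hx.out)).2)
    (fun x hx => hω₂ x (lt_of_le_of_lt haBω₂ hx.out))
  obtain ⟨c₂, hc₂a, hc₂⟩ := hB
  -- Final assembly
  refine ⟨max (max c₁ c₂) (max N₂ 1), fun x hx => ?_⟩
  have hx1 : (1:ℝ) < x := lt_of_le_of_lt (le_trans (le_max_right _ _) (le_max_right _ _)) hx
  have hxN₂ : N₂ ≤ x := le_of_lt (lt_of_le_of_lt (le_trans (le_max_left _ _) (le_max_right _ _)) hx)
  have hxc₁ : c₁ < x := lt_of_le_of_lt (le_trans (le_max_left _ _) (le_max_left _ _)) hx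
  have hxc₂ : c₂ < x := lt_of_le_of_lt (le_trans (le_max_right _ _) (le_max_left _ _)) hx
  have hφp : 0 < φ x := hφ_pos x hx1.le
  have hφne : φ x ≠ 0 := ne_of_gt hφp
  have hφlt1 : φ x < 1 := by
    have h := hN₂ x hxN₂
    have h2 : φ x ≤ x ^ (1:ℝ) * φ x := by
      rw [Real.rpow_one]
      exact le_mul_of_one_le_left hφp.le hx1.le
    linarith
  have hgx : g x = -Real.log (φ x) := by rw [hg]
  have hgd : deriv g x = -(deriv φ x / φ x) := by
    rw [hg]
    exact (((hφdiff x hx1).hasDerivAt.log hφne).neg).deriv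
  have hA' := hc₁ x hxc₁
  rw [hderiv ν x hx1] at hA'
  have hB' := hc₂ x hxc₂
  rw [hderiv (-ν) x hx1] at hB'
  -- key elementary inequalities
  have e1 : -1 < deriv φ x * φ x ^ (ν - 1) := by
    have h := hA'.1
    have heq : deriv φ x * φ x ^ (ν - 1) = deriv φ x * ν * φ x ^ (ν - 1) / ν := by
      field_simp
    rw [heq, lt_div_iff₀ hν0]
    linarith
  have e2 : deriv φ x * φ x ^ (-ν - 1) < -1 := by
    have h := hB'
    have heq : deriv φ x * φ x ^ (-ν - 1) = -(deriv φ x * -ν * φ x ^ (-ν - 1) / ν) := by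
      field_simp
    rw [heq, neg_lt, lt_div_iff₀ hν0]
    linarith
  have epow : φ x ^ (ν - 1) * φ x ^ (-ν) = (φ x)⁻¹ := by
    rw [← Real.rpow_add hφp]
    have h : ν - 1 + -ν = -1 := by ring
    rw [h, Real.rpow_neg_one]
  have epow2 : φ x ^ (-ν - 1) * φ x ^ ν = (φ x)⁻¹ := by
    rw [← Real.rpow_add hφp]
    have h : -ν - 1 + ν = -1 := by ring
    rw [h, Real.rpow_neg_one]
  have hQ1 : (0:ℝ) < φ x ^ (-ν) := Real.rpow_pos_of_pos hφp _
  have hQ2 : (0:ℝ) < φ x ^ ν := Real.rpow_pos_of_pos hφp _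
  have hlt : -(deriv φ x / φ x) < φ x ^ (-ν) := by
    rw [div_eq_mul_inv, ← epow]
    nlinarith [mul_pos (by linarith : (0:ℝ) < deriv φ x * φ x ^ (ν - 1) + 1) hQ1]
  have hgt : φ x ^ ν < -(deriv φ x / φ x) := by
    rw [div_eq_mul_inv, ← epow2]
    nlinarith [mul_pos (by linarith : (0:ℝ) < -1 - deriv φ x * φ x ^ (-ν - 1)) hQ2]
  -- exponential identities
  have he1 : Real.exp (ν * g x) = φ x ^ (-ν) := by
    rw [hgx, Real.rpow_def_of_pos hφp]
    congr 1
    ring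
  have he2 : Real.exp (-ν * g x) = φ x ^ ν := by
    rw [hgx, Real.rpow_def_of_pos hφp]
    congr 1
    ring
  have hApos : 0 < deriv g x := by
    rw [hgd]
    exact lt_trans hQ2 hgt
  -- ν-level goals
  have goal1ν : Real.exp (-ν * g x) < 1 / deriv g x := by
    have h := one_div_lt_one_div_of_lt hApos (show deriv g x < φ x ^ (-ν) by rw [hgd]; exact hlt)
    have h2 : 1 / φ x ^ (-ν) = φ x ^ ν := by
      rw [one_div, Real.rpow_neg hφp.le, inv_inv]
    rw [he2, ← h2]
    exact h
  have goal2ν : 1 / deriv g x < Real.exp (ν * g x) := by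
    have h := one_div_lt_one_div_of_lt hQ2 (show φ x ^ ν < deriv g x by rw [hgd]; exact hgt)
    have h2 : 1 / φ x ^ ν = φ x ^ (-ν) := by
      rw [one_div, Real.rpow_neg hφp.le]
    rw [he1, ← h2]
    exact h
  -- weakening ν to μ
  have hgx0 : 0 ≤ g x := by
    rw [hgx]
    have := Real.log_neg hφp hφlt1
    linarith
  have w1 : Real.exp (-μ * g x) ≤ Real.exp (-ν * g x) :=
    Real.exp_le_exp.mpr (by nlinarith [mul_nonneg (sub_nonneg.mpr hνμ) hgx0])
  have w2 : Real.exp (ν * g x) ≤ Real.exp (μ * g x) :=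
    Real.exp_le_exp.mpr (by nlinarith [mul_nonneg (sub_nonneg.mpr hνμ) hgx0])
  exact ⟨lt_of_le_of_lt w1 goal1ν, lt_of_lt_of_le goal2ν w2⟩
end

section
/- Let Y, Y₁, Y₂, … be i.i.d. positive random variables whose tail satisfies lim_{y→∞} ln Pr{Y > y}/ln y = −(θ−1) for some θ ∈ (1,2). Then almost surely lim_{n→∞} ln(∑_{i=1}^n Yᵢ)/ln n = 1/(θ−1); equivalently, the empirical mean satisfies (1/n)∑_{i=1}^n Yᵢ = n^{(2−θ)/(θ−1)+o(1)} almost surely. -/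
open MeasureTheory Filter ProbabilityTheory Set
open scoped ENNReal

private lemma tail_bound_of_tendsto {P : ℝ → ℝ} {θ : ℝ}
    (hP0 : ∀ y, 0 ≤ P y)
    (h : Tendsto (fun y => Real.log (P y) / Real.log y) atTop (nhds (-(θ - 1))))
    {δ : ℝ} (hδ : 0 < δ) (hδθ : δ < θ - 1) :
    ∃ y₀ : ℝ, 1 ≤ y₀ ∧ ∀ y, y₀ ≤ y →
      P y ≤ y ^ (δ - (θ - 1)) ∧ y ^ (-(θ - 1) - δ) ≤ P y := by
  have hmem : Set.Ioo (-(θ - 1) - δ) (-(θ - 1) + δ) ∈ nhds (-(θ - 1)) :=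
    Ioo_mem_nhds (by linarith) (by linarith)
  obtain ⟨y₁, hy₁⟩ := (eventually_atTop.1 (h.eventually hmem))
  refine ⟨max y₁ 2, le_trans (by norm_num) (le_max_right _ _), fun y hy => ?_⟩
  have hy2 : (2:ℝ) ≤ y := le_trans (le_max_right _ _) hy
  have hypos : (0:ℝ) < y := by linarith
  have hly : 0 < Real.log y := Real.log_pos (by linarith)
  obtain ⟨hlo, hhi⟩ := hy₁ y (le_trans (le_max_left _ _) hy)
  have hup : Real.log (P y) < (-(θ - 1) + δ) * Real.log y := by
    rw [div_lt_iff₀ hly] at hhi; exact hhi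
  have hlogneg : Real.log (P y) < 0 := by
    have : (-(θ - 1) + δ) * Real.log y < 0 :=
      mul_neg_of_neg_of_pos (by linarith) hly
    linarith
  have hPpos : 0 < P y := by
    rcases lt_or_eq_of_le (hP0 y) with h' | h'
    · exact h'
    · exfalso; rw [← h', Real.log_zero] at hlogneg; exact lt_irrefl 0 hlogneg
  have hlow : (-(θ - 1) - δ) * Real.log y < Real.log (P y) := by
    rw [lt_div_iff₀ hly] at hlo; exact hlo
  constructor
  · have : P y = Real.exp (Real.log (P y)) := (Real.exp_log hPpos).symm
    rw [this, Real.rpow_def_of_pos hypos]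
    exact (Real.exp_le_exp.2 (by rw [mul_comm]; linarith)).trans le_rfl
  · rw [Real.rpow_def_of_pos hypos, ← Real.exp_log hPpos]
    exact Real.exp_le_exp.2 (by rw [mul_comm]; linarith)

private lemma tail_upper_global {P : ℝ → ℝ} {θ : ℝ}
    (hP0 : ∀ y, 0 ≤ P y) (hP1 : ∀ y, P y ≤ 1)
    (h : Tendsto (fun y => Real.log (P y) / Real.log y) atTop (nhds (-(θ - 1))))
    {δ : ℝ} (hδ : 0 < δ) (hδθ : δ < θ - 1) :
    ∃ C : ℝ, 1 ≤ C ∧ ∀ t, 0 < t → P t ≤ C * t ^ (δ - (θ - 1)) := by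
  obtain ⟨y₀, hy₀1, hy₀⟩ := tail_bound_of_tendsto hP0 h hδ hδθ
  have hy₀pos : 0 < y₀ := lt_of_lt_of_le one_pos hy₀1
  refine ⟨y₀ ^ (θ - 1 - δ), Real.one_le_rpow hy₀1 (by linarith), fun t ht => ?_⟩
  rcases le_or_gt y₀ t with h' | h'
  · calc P t ≤ t ^ (δ - (θ - 1)) := (hy₀ t h').1
      _ ≤ y₀ ^ (θ - 1 - δ) * t ^ (δ - (θ - 1)) :=
        le_mul_of_one_le_left (Real.rpow_nonneg ht.le _) (Real.one_le_rpow hy₀1 (by linarith))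
  · have h1 : y₀ ^ (δ - (θ - 1)) ≤ t ^ (δ - (θ - 1)) :=
      Real.rpow_le_rpow_of_nonpos ht h'.le (by linarith)
    have h2 : (1:ℝ) ≤ y₀ ^ (θ - 1 - δ) * t ^ (δ - (θ - 1)) := by
      calc (1:ℝ) = y₀ ^ (θ - 1 - δ) * y₀ ^ (δ - (θ - 1)) := by
            rw [← Real.rpow_add hy₀pos]; norm_num
        _ ≤ _ := by
            exact mul_le_mul_of_nonneg_left h1 (Real.rpow_nonneg hy₀pos.le _)
    exact (hP1 t).trans h2
private lemma trunc_lintegral_le {Ω : Type*} [MeasureSpace Ω] [IsProbabilityMeasure (ℙ : Measure Ω)]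
    {Y : Ω → ℝ} (hYm : Measurable Y) (hYpos : ∀ a, 0 < Y a)
    {C c : ℝ} (hC : 0 ≤ C) (hc1 : -1 < c) (hc0 : c < 0)
    (hP : ∀ t, 0 < t → (ℙ {a | t < Y a}).toReal ≤ C * t ^ c)
    {u : ℝ} (hu : 0 < u) :
    ∫⁻ a, ENNReal.ofReal (min (Y a) u) ∂ℙ ≤ ENNReal.ofReal (C * u ^ (c+1) / (c+1)) := by
  have hfm : Measurable fun a => min (Y a) u := hYm.min measurable_const
  have hfnn : 0 ≤ᵐ[(ℙ : Measure Ω)] fun a => min (Y a) u :=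
    ae_of_all _ fun a => le_min (hYpos a).le hu.le
  rw [lintegral_eq_lintegral_meas_lt (ℙ : Measure Ω) hfnn hfm.aemeasurable]
  have hbound : ∫⁻ t in Ioi (0:ℝ), ℙ {a | t < min (Y a) u}
      ≤ ∫⁻ t in Ioi (0:ℝ), (Ioo (0:ℝ) u).indicator (fun t => ENNReal.ofReal (C * t ^ c)) t := by
    apply lintegral_mono_ae
    rw [ae_restrict_iff' measurableSet_Ioi]
    refine ae_of_all _ fun t ht => ?_
    rcases lt_or_ge t u with h' | h'
    · rw [Set.indicator_of_mem (Set.mem_Ioo.2 ⟨ht, h'⟩)]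
      have hsub : {a : Ω | t < min (Y a) u} ⊆ {a : Ω | t < Y a} :=
        fun a ha => Set.mem_setOf_eq ▸ lt_of_lt_of_le (Set.mem_setOf_eq ▸ ha) (min_le_left _ _)
      refine le_trans (measure_mono hsub) ?_
      rw [ENNReal.le_ofReal_iff_toReal_le (measure_ne_top _ _)
        (mul_nonneg hC (Real.rpow_nonneg (le_of_lt ht) _))]
      exact hP t ht
    · have : {a : Ω | t < min (Y a) u} = ∅ := by
        ext a; simp only [Set.mem_setOf_eq, Set.mem_empty_iff_false, iff_false, not_lt]
        exact (min_le_right _ _).trans h'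
      rw [this, measure_empty]
      exact zero_le
  refine hbound.trans ?_
  rw [lintegral_indicator measurableSet_Ioo, Measure.restrict_restrict measurableSet_Ioo,
    Set.inter_eq_left.2 (Set.Ioo_subset_Ioi_self)]
  have hint : IntegrableOn (fun t : ℝ => C * t ^ c) (Ioo 0 u) := by
    have h1 : IntervalIntegrable (fun t : ℝ => t ^ c) volume 0 u :=
      intervalIntegral.intervalIntegrable_rpow' hc1
    have h2 : IntegrableOn (fun t : ℝ => t ^ c) (Ioc 0 u) :=
      (intervalIntegrable_iff_integrableOn_Ioc_of_le hu.le).1 h1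
    exact (h2.mono_set Set.Ioo_subset_Ioc_self).const_mul C
  have hnn : 0 ≤ᵐ[volume.restrict (Ioo (0:ℝ) u)] fun t : ℝ => C * t ^ c :=
    (ae_restrict_iff' measurableSet_Ioo).2
      (ae_of_all _ fun t ht => mul_nonneg hC (Real.rpow_nonneg (le_of_lt ht.1) _))
  rw [← ofReal_integral_eq_lintegral_ofReal hint hnn]
  apply ENNReal.ofReal_le_ofReal
  rw [← integral_Ioc_eq_integral_Ioo, ← intervalIntegral.integral_of_le hu.le,
    intervalIntegral.integral_const_mul, integral_rpow (Or.inl hc1),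
    Real.zero_rpow (by linarith : c + 1 ≠ 0)]
  rw [mul_div_assoc]
  ring_nf
  exact le_rfl

section
variable {Ω : Type*} [MeasureSpace Ω] [IsProbabilityMeasure (ℙ : Measure Ω)]
    (Y : ℕ → Ω → ℝ)

private lemma ident_tail (hY_meas : ∀ i, Measurable (Y i))
    (hY_ident : ∀ i, Measure.map (Y i) ℙ = Measure.map (Y 0) ℙ) (i : ℕ) (t : ℝ) :
    ℙ {a | t < Y i a} = ℙ {a | t < Y 0 a} := by
  have h1 : {a | t < Y i a} = Y i ⁻¹' Ioi t := rfl
  have h2 : {a | t < Y 0 a} = Y 0 ⁻¹' Ioi t := rfl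
  rw [h1, h2, ← Measure.map_apply (hY_meas i) measurableSet_Ioi,
    ← Measure.map_apply (hY_meas 0) measurableSet_Ioi, hY_ident i]

private lemma ident_trunc (hY_meas : ∀ i, Measurable (Y i))
    (hY_ident : ∀ i, Measure.map (Y i) ℙ = Measure.map (Y 0) ℙ) (i : ℕ) (u : ℝ) :
    ∫⁻ a, ENNReal.ofReal (min (Y i a) u) ∂ℙ = ∫⁻ a, ENNReal.ofReal (min (Y 0 a) u) ∂ℙ := by
  have hg : Measurable fun x : ℝ => ENNReal.ofReal (min x u) :=
    ENNReal.measurable_ofReal.comp (measurable_id.min measurable_const)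
  rw [← lintegral_map hg (hY_meas i), hY_ident i, lintegral_map hg (hY_meas 0)]

private lemma upper_event_bound (hY_meas : ∀ i, Measurable (Y i))
    (hY_pos : ∀ i a, 0 < Y i a)
    (hY_ident : ∀ i, Measure.map (Y i) ℙ = Measure.map (Y 0) ℙ)
    {C c : ℝ} (hC : 0 ≤ C) (hc1 : -1 < c) (hc0 : c < 0)
    (hP : ∀ t, 0 < t → (ℙ {a | t < Y 0 a}).toReal ≤ C * t ^ c)
    {u : ℝ} (hu : 0 < u) (n : ℕ) :
    ℙ {a | u < ∑ i ∈ Finset.range n, Y i a}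
      ≤ (n : ℝ≥0∞) * ENNReal.ofReal (C * u ^ c)
        + (n : ℝ≥0∞) * ENNReal.ofReal (C * u ^ (c+1) / (c+1)) / ENNReal.ofReal u := by
  set T : Ω → ℝ := fun a => ∑ i ∈ Finset.range n, min (Y i a) u with hT
  have hTnn : ∀ a, 0 ≤ T a := fun a =>
    Finset.sum_nonneg fun i _ => le_min (hY_pos i a).le hu.le
  have hTm : Measurable T :=
    Finset.measurable_sum _ fun i _ => (hY_meas i).min measurable_const
  -- inclusion
  have hsub : {a | u < ∑ i ∈ Finset.range n, Y i a}
      ⊆ (⋃ i ∈ Finset.range n, {a | u < Y i a}) ∪ {a | u ≤ T a} := by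
    intro a ha
    by_cases hex : ∃ i ∈ Finset.range n, u < Y i a
    · obtain ⟨i, hi, hui⟩ := hex
      exact Or.inl (Set.mem_biUnion hi hui)
    · push_neg at hex
      right
      have : T a = ∑ i ∈ Finset.range n, Y i a :=
        Finset.sum_congr rfl fun i hi => min_eq_left (hex i hi)
      simp only [Set.mem_setOf_eq] at ha ⊢
      rw [this]; exact ha.le
  refine (measure_mono hsub).trans ((measure_union_le _ _).trans (add_le_add ?_ ?_))
  · refine (measure_biUnion_finset_le _ _).trans ?_
    have hone : ∀ i ∈ Finset.range n, ℙ {a | u < Y i a} ≤ ENNReal.ofReal (C * u ^ c) := by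
      intro i _
      rw [ident_tail Y hY_meas hY_ident i u, ENNReal.le_ofReal_iff_toReal_le (measure_ne_top _ _)
        (mul_nonneg hC (Real.rpow_nonneg hu.le _))]
      exact hP u hu
    calc ∑ i ∈ Finset.range n, ℙ {a | u < Y i a}
        ≤ ∑ _i ∈ Finset.range n, ENNReal.ofReal (C * u ^ c) := Finset.sum_le_sum hone
      _ = (n : ℝ≥0∞) * ENNReal.ofReal (C * u ^ c) := by
          rw [Finset.sum_const, Finset.card_range, nsmul_eq_mul]
  · -- Markov
    have hset : {a | u ≤ T a} = {x | ENNReal.ofReal u ≤ ENNReal.ofReal (T x)} := by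
      ext a; simp only [Set.mem_setOf_eq]
      rw [ENNReal.ofReal_le_ofReal_iff (hTnn a)]
    have hmark := meas_ge_le_lintegral_div (μ := (ℙ : Measure Ω))
      (f := fun a => ENNReal.ofReal (T a)) (hTm.ennreal_ofReal).aemeasurable
      (ε := ENNReal.ofReal u) (by simp [hu, ENNReal.ofReal_eq_zero, not_le]) ENNReal.ofReal_ne_top
    rw [← hset] at hmark
    refine hmark.trans ?_
    have hlin : ∫⁻ a, ENNReal.ofReal (T a) ∂ℙ
        ≤ (n : ℝ≥0∞) * ENNReal.ofReal (C * u ^ (c+1) / (c+1)) := by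
      have heq : ∀ a : Ω, ENNReal.ofReal (T a)
          = ∑ i ∈ Finset.range n, ENNReal.ofReal (min (Y i a) u) := fun a =>
        ENNReal.ofReal_sum_of_nonneg fun i _ => le_min (hY_pos i a).le hu.le
      calc ∫⁻ a, ENNReal.ofReal (T a) ∂ℙ
          = ∑ i ∈ Finset.range n, ∫⁻ a, ENNReal.ofReal (min (Y i a) u) ∂ℙ := by
            simp_rw [heq]
            exact lintegral_finset_sum _ fun i _ =>
              ((hY_meas i).min measurable_const).ennreal_ofReal
        _ ≤ ∑ _i ∈ Finset.range n, ENNReal.ofReal (C * u ^ (c+1) / (c+1)) := by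
            refine Finset.sum_le_sum fun i _ => ?_
            rw [ident_trunc Y hY_meas hY_ident i u]
            exact trunc_lintegral_le (hY_meas 0) (hY_pos 0) hC hc1 hc0 hP hu
        _ = (n : ℝ≥0∞) * ENNReal.ofReal (C * u ^ (c+1) / (c+1)) := by
            rw [Finset.sum_const, Finset.card_range, nsmul_eq_mul]
    exact ENNReal.div_le_div_right hlin _

private lemma lower_event_bound (hY_meas : ∀ i, Measurable (Y i))
    (hY_indep : iIndepFun (m := fun _ => Real.measurableSpace) Y ℙ)
    (hY_ident : ∀ i, Measure.map (Y i) ℙ = Measure.map (Y 0) ℙ)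
    (v : ℝ) (n : ℕ) :
    ℙ (⋂ i ∈ Finset.range n, {a | Y i a ≤ v})
      ≤ ENNReal.ofReal (Real.exp (-((n : ℝ) * (ℙ {a | v < Y 0 a}).toReal))) := by
  set p : ℝ := (ℙ {a | v < Y 0 a}).toReal with hp
  have hpre : ∀ i : ℕ, {a : Ω | Y i a ≤ v} = Y i ⁻¹' Iic v := fun i => rfl
  have hprod : ℙ (⋂ i ∈ Finset.range n, {a | Y i a ≤ v})
      = ∏ i ∈ Finset.range n, ℙ (Y i ⁻¹' Iic v) := by
    simp_rw [hpre]
    exact hY_indep.measure_inter_preimage_eq_mul (Finset.range n)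
      (sets := fun _ => Iic v) (fun i _ => measurableSet_Iic)
  have hident : ∀ i : ℕ, ℙ (Y i ⁻¹' Iic v) = ℙ (Y 0 ⁻¹' Iic v) := by
    intro i
    rw [← Measure.map_apply (hY_meas i) measurableSet_Iic,
      ← Measure.map_apply (hY_meas 0) measurableSet_Iic, hY_ident i]
  have hcompl : ℙ (Y 0 ⁻¹' Iic v) = 1 - ℙ {a | v < Y 0 a} := by
    have : Y 0 ⁻¹' Iic v = {a | v < Y 0 a}ᶜ := by
      ext a; simp [Set.mem_setOf_eq, not_lt]
    rw [this]; exact prob_compl_eq_one_sub ((hY_meas 0) measurableSet_Ioi)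
  have hq : ℙ (Y 0 ⁻¹' Iic v) ≤ ENNReal.ofReal (Real.exp (-p)) := by
    rw [hcompl, ← ENNReal.ofReal_toReal (a := 1 - ℙ {a | v < Y 0 a}) (by
      exact (tsub_le_self.trans_lt ENNReal.one_lt_top).ne)]
    apply ENNReal.ofReal_le_ofReal
    rw [ENNReal.toReal_sub_of_le prob_le_one ENNReal.one_ne_top, ENNReal.toReal_one, ← hp]
    linarith [Real.add_one_le_exp (-p)]
  calc ℙ (⋂ i ∈ Finset.range n, {a | Y i a ≤ v})
      = ℙ (Y 0 ⁻¹' Iic v) ^ n := by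
        rw [hprod, Finset.prod_congr rfl fun i _ => hident i, Finset.prod_const,
          Finset.card_range]
    _ ≤ ENNReal.ofReal (Real.exp (-p)) ^ n := pow_le_pow_left' hq n
    _ = ENNReal.ofReal (Real.exp (-p) ^ n) := by
        rw [ENNReal.ofReal_pow (Real.exp_nonneg _)]
    _ = ENNReal.ofReal (Real.exp (-((n:ℝ) * p))) := by
        rw [← Real.exp_nat_mul]; ring_nf
end
private lemma bc_of_eventually_geom {Ω : Type*} [MeasureSpace Ω]
    [IsProbabilityMeasure (ℙ : Measure Ω)] {s : ℕ → Set Ω} {ρ D : ℝ}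
    (hρ0 : 0 < ρ) (hρ1 : ρ < 1) (hD : 0 ≤ D) (K : ℕ)
    (h : ∀ k, K ≤ k → ℙ (s k) ≤ ENNReal.ofReal (D * ρ ^ k)) :
    ∀ᵐ a ∂(ℙ : Measure Ω), ∀ᶠ k in atTop, a ∉ s k := by
  set B : ℝ := max D 1 / ρ ^ K with hBdef
  have hρK : 0 < ρ ^ K := pow_pos hρ0 K
  have hB0 : 0 ≤ B := div_nonneg (le_trans zero_le_one (le_max_right _ _)) hρK.le
  have hbound : ∀ k, ℙ (s k) ≤ ENNReal.ofReal (B * ρ ^ k) := by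
    intro k
    rcases le_or_gt K k with hk | hk
    · refine (h k hk).trans (ENNReal.ofReal_le_ofReal ?_)
      refine mul_le_mul_of_nonneg_right ?_ (pow_nonneg hρ0.le k)
      calc D ≤ max D 1 := le_max_left _ _
        _ ≤ max D 1 / ρ ^ K := by
            rw [le_div_iff₀ hρK]
            exact mul_le_of_le_one_right (le_trans zero_le_one (le_max_right _ _))
              (pow_le_one₀ hρ0.le hρ1.le)
    · refine prob_le_one.trans ?_
      rw [show (1:ℝ≥0∞) = ENNReal.ofReal 1 by simp]
      apply ENNReal.ofReal_le_ofReal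
      rw [hBdef, div_mul_eq_mul_div, le_div_iff₀ hρK]
      calc (1:ℝ) * ρ ^ K = ρ ^ K := one_mul _
        _ ≤ ρ ^ k := pow_le_pow_of_le_one hρ0.le hρ1.le hk.le
        _ ≤ max D 1 * ρ ^ k :=
            le_mul_of_one_le_left (pow_nonneg hρ0.le k) (le_max_right _ _)
  apply ae_eventually_notMem
  have hsum : Summable fun k => B * ρ ^ k :=
    (summable_geometric_of_lt_one hρ0.le hρ1).mul_left B
  have hle : ∑' k, ℙ (s k) ≤ ENNReal.ofReal (∑' k, B * ρ ^ k) := by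
    calc ∑' k, ℙ (s k) ≤ ∑' k, ENNReal.ofReal (B * ρ ^ k) := ENNReal.tsum_le_tsum hbound
      _ = ENNReal.ofReal (∑' k, B * ρ ^ k) :=
        (ENNReal.ofReal_tsum_of_nonneg (fun k => mul_nonneg hB0 (pow_nonneg hρ0.le k)) hsum).symm
  exact (hle.trans_lt ENNReal.ofReal_lt_top).ne

private lemma two_pow_pow (k : ℕ) (x : ℝ) : (((2:ℝ)^k : ℝ)) ^ x = ((2:ℝ) ^ x) ^ k := by
  rw [← Real.rpow_natCast ((2:ℝ) ^ x) k, ← Real.rpow_natCast (2:ℝ) k,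
    ← Real.rpow_mul (by norm_num), ← Real.rpow_mul (by norm_num), mul_comm]

set_option maxHeartbeats 1000000 in
/-- For i.i.d. positive random variables with power-law-like tail of exponent `θ - 1` with
`θ ∈ (1,2)` (so infinite mean), almost surely `log (∑_{i<n} Y i) / log n → 1/(θ-1)`;
equivalently the empirical mean is `n^{(2-θ)/(θ-1) + o(1)}`. -/
theorem stmt_11
    {Ω : Type*} [MeasureSpace Ω] [IsProbabilityMeasure (ℙ : Measure Ω)]
    (Y : ℕ → Ω → ℝ) (θ : ℝ) (hθ : θ ∈ Set.Ioo (1 : ℝ) 2)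
    (hY_meas : ∀ i, Measurable (Y i))
    (hY_pos : ∀ i a, 0 < Y i a)
    (hY_indep : iIndepFun (m := fun _ => Real.measurableSpace) Y ℙ)
    (hY_ident : ∀ i, Measure.map (Y i) ℙ = Measure.map (Y 0) ℙ)
    (hY_tail : Tendsto
      (fun y : ℝ => Real.log (ℙ {a : Ω | y < Y 0 a}).toReal / Real.log y)
      atTop (nhds (-(θ - 1)))) :
    ∀ᵐ a ∂(ℙ : Measure Ω),
      Tendsto
        (fun n : ℕ => Real.log (∑ i ∈ Finset.range n, Y i a) / Real.log n)
        atTop (nhds (1 / (θ - 1))) := by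
  obtain ⟨hθ1, hθ2⟩ := hθ
  have hθ1' : (0:ℝ) < θ - 1 := by linarith
  have hθ2' : θ - 1 < 1 := by linarith
  set L : ℝ := 1 / (θ - 1) with hLdef
  have hLpos : 0 < L := by positivity
  have hP0 : ∀ y : ℝ, 0 ≤ (ℙ {a : Ω | y < Y 0 a}).toReal := fun y => ENNReal.toReal_nonneg
  have hP1 : ∀ y : ℝ, (ℙ {a : Ω | y < Y 0 a}).toReal ≤ 1 := fun y => by
    simpa using ENNReal.toReal_mono ENNReal.one_ne_top
      (prob_le_one (μ := (ℙ : Measure Ω)) (s := {a | y < Y 0 a}))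
  set ε : ℕ → ℝ := fun m => 1 / ((m:ℝ) + 2) with hεdef
  have hε_pos : ∀ m, 0 < ε m := fun m => by positivity
  have hε_le : ∀ m, ε m ≤ 1/2 := fun m => by
    rw [hεdef]
    rw [div_le_div_iff₀ (by positivity) (by norm_num)]
    have : (0:ℝ) ≤ (m:ℝ) := Nat.cast_nonneg m
    linarith
  set α : ℕ → ℝ := fun m => (1 + ε m) / (θ - 1) with hαdef
  set β : ℕ → ℝ := fun m => (1 - ε m) / (θ - 1) with hβdef
  have hαpos : ∀ m, 0 < α m := fun m => by
    have := hε_pos m; rw [hαdef]; positivity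
  have hβpos : ∀ m, 0 < β m := fun m => by
    have h1 := hε_le m
    apply div_pos (by linarith) hθ1'
  have hαθ : ∀ m, α m * (θ - 1) = 1 + ε m := fun m => by
    rw [hαdef]; field_simp
  have hβθ : ∀ m, β m * (θ - 1) = 1 - ε m := fun m => by
    rw [hβdef]; field_simp
  -- ρ for each m
  set ρ : ℕ → ℝ := fun m => (2:ℝ) ^ (-(ε m)/2) with hρdef
  have hρ0 : ∀ m, 0 < ρ m := fun m => Real.rpow_pos_of_pos two_pos _
  have hρ1 : ∀ m, ρ m < 1 := fun m =>
    Real.rpow_lt_one_of_one_lt_of_neg one_lt_two (by have := hε_pos m; linarith)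
  -- UPPER BOUND events
  have hupper : ∀ m : ℕ, ∀ᵐ a ∂(ℙ : Measure Ω), ∀ᶠ k in atTop,
      ∑ i ∈ Finset.range (2^k), Y i a ≤ (((2:ℝ)^k : ℝ)) ^ (α m) := by
    intro m
    have hεm := hε_pos m
    have hαm := hαpos m
    set δ : ℝ := ε m / (2 * α m) with hδdef
    have hδpos : 0 < δ := by rw [hδdef]; positivity
    have hαδ : α m * δ = ε m / 2 := by rw [hδdef]; field_simp
    have hδθ : δ < θ - 1 := by
      rw [hδdef, div_lt_iff₀ (by positivity)]
      nlinarith [hαθ m]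
    set c : ℝ := δ - (θ - 1) with hcdef
    have hc1 : -1 < c := by rw [hcdef]; linarith
    have hc0 : c < 0 := by rw [hcdef]; linarith
    have h1c : 1 + α m * c = -(ε m)/2 := by
      rw [hcdef, mul_sub]
      rw [hαθ m] at *
      nlinarith [hαδ, hαθ m]
    obtain ⟨C, hC1, hCb⟩ := tail_upper_global hP0 hP1 hY_tail hδpos hδθ
    have hC0 : 0 ≤ C := le_trans zero_le_one hC1
    have hc1pos : 0 < c + 1 := by linarith
    set D : ℝ := C + C / (c + 1) with hDdef
    have hD0 : 0 ≤ D := add_nonneg hC0 (div_nonneg hC0 hc1pos.le)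
    have hev : ∀ k : ℕ, ℙ {a : Ω | (((2:ℝ)^k : ℝ)) ^ (α m) < ∑ i ∈ Finset.range (2^k), Y i a}
        ≤ ENNReal.ofReal (D * (ρ m) ^ k) := by
      intro k
      set b : ℝ := ((2:ℝ)^k : ℝ) with hbdef
      have hbpos : 0 < b := by positivity
      set u : ℝ := b ^ (α m) with hudef
      have hupos : 0 < u := Real.rpow_pos_of_pos hbpos _
      have hcast : ((2^k : ℕ) : ℝ) = b := by rw [hbdef]; push_cast; ring
      have hkey : b * u ^ c = (ρ m) ^ k := by
        rw [hudef, ← Real.rpow_mul hbpos.le]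
        nth_rewrite 1 [← Real.rpow_one b]
        rw [← Real.rpow_add hbpos, h1c, hbdef, two_pow_pow, hρdef]
      have hub := upper_event_bound Y hY_meas hY_pos hY_ident hC0 hc1 hc0 hCb hupos (2^k)
      refine hub.trans ?_
      have ht1 : ((2^k : ℕ) : ℝ≥0∞) * ENNReal.ofReal (C * u ^ c)
          = ENNReal.ofReal (C * (ρ m) ^ k) := by
        rw [← ENNReal.ofReal_natCast (2^k), ← ENNReal.ofReal_mul (by positivity), hcast]
        congr 1
        rw [← hkey]; ring
      have ht2 : ((2^k : ℕ) : ℝ≥0∞) * ENNReal.ofReal (C * u ^ (c+1) / (c+1)) / ENNReal.ofReal u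
          = ENNReal.ofReal (C / (c+1) * (ρ m) ^ k) := by
        rw [← ENNReal.ofReal_natCast (2^k), ← ENNReal.ofReal_mul (by positivity), hcast,
          ← ENNReal.ofReal_div_of_pos hupos]
        congr 1
        rw [← hkey, Real.rpow_add hupos c 1, Real.rpow_one]
        field_simp
      rw [ht1, ht2, ← ENNReal.ofReal_add (by positivity)
        (mul_nonneg (div_nonneg hC0 hc1pos.le) (pow_nonneg (hρ0 m).le k))]
      apply ENNReal.ofReal_le_ofReal
      rw [hDdef]; ring_nf; exact le_rfl
    have hbc := bc_of_eventually_geom (hρ0 m) (hρ1 m) hD0 0 (fun k _ => hev k)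
    filter_upwards [hbc] with a ha
    exact ha.mono fun k hk => not_lt.1 hk
  -- LOWER BOUND events
  have hlower : ∀ m : ℕ, ∀ᵐ a ∂(ℙ : Measure Ω), ∀ᶠ k in atTop,
      (((2:ℝ)^k : ℝ)) ^ (β m) < ∑ i ∈ Finset.range (2^k), Y i a := by
    intro m
    have hεm := hε_pos m
    have hεle := hε_le m
    have hβm := hβpos m
    set δ : ℝ := ε m / (2 * β m) with hδdef
    have hδpos : 0 < δ := by rw [hδdef]; positivity
    have hβδ : β m * δ = ε m / 2 := by rw [hδdef]; field_simp
    have hδθ : δ < θ - 1 := by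
      rw [hδdef, div_lt_iff₀ (by positivity)]
      nlinarith [hβθ m]
    obtain ⟨y₀, hy₀1, hy₀⟩ := tail_bound_of_tendsto hP0 hY_tail hδpos hδθ
    -- threshold K for v k ≥ y₀
    have hvtend : Tendsto (fun k : ℕ => (((2:ℝ)^k : ℝ)) ^ (β m)) atTop atTop :=
      (tendsto_rpow_atTop hβm).comp (tendsto_pow_atTop_atTop_of_one_lt one_lt_two)
    obtain ⟨K, hK⟩ := eventually_atTop.1 (hvtend.eventually_ge_atTop y₀)
    have hev : ∀ k : ℕ, K ≤ k →
        ℙ (⋂ i ∈ Finset.range (2^k), {a : Ω | Y i a ≤ (((2:ℝ)^k : ℝ)) ^ (β m)})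
          ≤ ENNReal.ofReal (1 * (ρ m) ^ k) := by
      intro k hk
      set b : ℝ := ((2:ℝ)^k : ℝ) with hbdef
      have hbpos : 0 < b := by positivity
      set v : ℝ := b ^ (β m) with hvdef
      have hvpos : 0 < v := Real.rpow_pos_of_pos hbpos _
      have hcast : ((2^k : ℕ) : ℝ) = b := by rw [hbdef]; push_cast; ring
      set p : ℝ := (ℙ {a : Ω | v < Y 0 a}).toReal with hpdef
      have hple := (hy₀ v (hK k hk)).2
      have hβid : β m * (-(θ - 1) - δ) = -(1 - ε m / 2) := by
        rw [mul_sub, mul_neg, hβθ m]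
        nlinarith [hβδ]
      have hvp : v ^ (-(θ-1) - δ) = b ^ (-(1 - ε m / 2)) := by
        rw [hvdef, ← Real.rpow_mul hbpos.le, hβid]
      have hnp : (((2:ℕ)^k : ℕ) : ℝ) * p ≥ (k:ℝ) * (ε m / 2) * Real.log 2 := by
        have h1 : (((2:ℕ)^k : ℕ) : ℝ) * p ≥ b * b ^ (-(1 - ε m / 2)) := by
          rw [hcast]
          apply mul_le_mul_of_nonneg_left _ hbpos.le
          rw [← hvp]; exact hple
        have h2 : b * b ^ (-(1 - ε m / 2)) = b ^ (ε m / 2) := by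
          nth_rewrite 1 [← Real.rpow_one b]
          rw [← Real.rpow_add hbpos]; congr 1; ring
        have h3 : b ^ (ε m / 2) = Real.exp (Real.log 2 * ((k:ℝ) * (ε m / 2))) := by
          rw [hbdef, ← Real.rpow_natCast (2:ℝ) k, ← Real.rpow_mul (by norm_num),
            Real.rpow_def_of_pos (by norm_num)]
        have h4 := Real.add_one_le_exp (Real.log 2 * ((k:ℝ) * (ε m / 2)))
        rw [h2, h3] at h1
        nlinarith
      have hlb := lower_event_bound Y hY_meas hY_indep hY_ident v (2^k)
      refine hlb.trans ?_
      rw [one_mul]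
      apply ENNReal.ofReal_le_ofReal
      have hexp : (ρ m) ^ k = Real.exp (-((k:ℝ) * (ε m / 2) * Real.log 2)) := by
        have hρm : ρ m = (2:ℝ) ^ (-ε m / 2) := rfl
        rw [hρm, Real.rpow_def_of_pos (by norm_num : (0:ℝ) < 2), ← Real.exp_nat_mul]
        congr 1; ring
      rw [hexp]
      apply Real.exp_le_exp.2
      push_cast at hnp ⊢
      linarith
    have hbc := bc_of_eventually_geom (hρ0 m) (hρ1 m) zero_le_one K hev
    filter_upwards [hbc] with a ha
    refine ha.mono fun k hk => ?_
    simp only [Set.mem_iInter, Set.mem_setOf_eq, not_forall] at hk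
    obtain ⟨i, hi, hvi⟩ := hk
    push_neg at hvi
    calc (((2:ℝ)^k : ℝ)) ^ (β m) < Y i a := hvi
      _ ≤ ∑ j ∈ Finset.range (2^k), Y j a :=
        Finset.single_le_sum (fun j _ => (hY_pos j a).le) hi
  -- combine
  have hcomb : ∀ᵐ a ∂(ℙ : Measure Ω), ∀ m : ℕ,
      (∀ᶠ k in atTop, ∑ i ∈ Finset.range (2^k), Y i a ≤ (((2:ℝ)^k : ℝ)) ^ (α m)) ∧
      (∀ᶠ k in atTop, (((2:ℝ)^k : ℝ)) ^ (β m) < ∑ i ∈ Finset.range (2^k), Y i a) :=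
    ae_all_iff.2 fun m => (hupper m).and (hlower m)
  -- endgame
  filter_upwards [hcomb] with a ha
  have hSpos : ∀ n : ℕ, 1 ≤ n → 0 < ∑ i ∈ Finset.range n, Y i a := fun n hn =>
    Finset.sum_pos (fun i _ => hY_pos i a) (Finset.nonempty_range_iff.2 (by omega))
  have hSmono : ∀ {n n' : ℕ}, n ≤ n' →
      (∑ i ∈ Finset.range n, Y i a) ≤ ∑ i ∈ Finset.range n', Y i a := fun h =>
    Finset.sum_le_sum_of_subset_of_nonneg (Finset.range_subset_range.2 h)
      (fun i _ _ => (hY_pos i a).le)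
  have hbd : ∀ m : ℕ, ∀ᶠ n : ℕ in atTop,
      β m * (Real.log n - Real.log 2) ≤ Real.log (∑ i ∈ Finset.range n, Y i a) ∧
      Real.log (∑ i ∈ Finset.range n, Y i a) ≤ α m * (Real.log n + Real.log 2) := by
    intro m
    obtain ⟨hu, hl⟩ := ha m
    obtain ⟨K₁, hK₁⟩ := eventually_atTop.1 hu
    obtain ⟨K₂, hK₂⟩ := eventually_atTop.1 hl
    rw [eventually_atTop]
    refine ⟨2 ^ (K₁ + K₂) + 1, fun n hn => ?_⟩
    have hn1 : 1 ≤ n := by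
      have := Nat.one_le_two_pow (n := K₁ + K₂); omega
    set k := Nat.log 2 n with hkdef
    have hkK : K₁ + K₂ ≤ k := by
      rw [hkdef]
      have h2n : 2 ^ (K₁ + K₂) ≤ n := by omega
      exact (Nat.le_log_iff_pow_le one_lt_two (by omega)).2 h2n
    have h2k : 2 ^ k ≤ n := Nat.pow_log_le_self 2 (by omega)
    have hn2k : n < 2 ^ (k + 1) := Nat.lt_pow_succ_log_self one_lt_two n
    have hlow := hK₂ k (le_trans (Nat.le_add_left _ _) hkK)
    have hup := hK₁ (k+1) (le_trans (le_trans (Nat.le_add_right _ _) hkK) (Nat.le_succ _))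
    have hS1 : (((2:ℝ)^k : ℝ)) ^ (β m) < ∑ i ∈ Finset.range n, Y i a := by
      refine lt_of_lt_of_le hlow (le_trans (hSmono h2k) le_rfl)
    have hS2 : (∑ i ∈ Finset.range n, Y i a) ≤ (((2:ℝ)^(k+1) : ℝ)) ^ (α m) :=
      le_trans (hSmono hn2k.le) hup
    have hnR : (0:ℝ) < (n:ℝ) := by exact_mod_cast hn1
    constructor
    · have hhalf : (n:ℝ)/2 ≤ (2:ℝ)^k := by
        have h'' : (n:ℝ) < ((2:ℝ))^(k+1) := by exact_mod_cast hn2k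
        rw [pow_succ] at h''
        linarith
      have hnhalf : (0:ℝ) < (n:ℝ)/2 := by positivity
      have h1 : ((n:ℝ)/2) ^ (β m) ≤ (((2:ℝ)^k : ℝ)) ^ (β m) :=
        Real.rpow_le_rpow hnhalf.le hhalf (hβpos m).le
      have h2 : ((n:ℝ)/2) ^ (β m) < ∑ i ∈ Finset.range n, Y i a := lt_of_le_of_lt h1 hS1
      calc β m * (Real.log n - Real.log 2) = Real.log (((n:ℝ)/2) ^ (β m)) := by
            rw [Real.log_rpow hnhalf, Real.log_div (by positivity) (by norm_num)]
        _ ≤ Real.log (∑ i ∈ Finset.range n, Y i a) :=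
            Real.log_le_log (Real.rpow_pos_of_pos hnhalf _) h2.le
    · have h2n : ((2:ℝ)^(k+1) : ℝ) ≤ 2 * (n:ℝ) := by
        have h' : ((2:ℝ)^k : ℝ) ≤ (n:ℝ) := by exact_mod_cast h2k
        have : ((2:ℝ)^(k+1) : ℝ) = 2 * (2:ℝ)^k := by ring
        linarith
      have h1 : (((2:ℝ)^(k+1)) : ℝ) ^ (α m) ≤ (2 * (n:ℝ)) ^ (α m) :=
        Real.rpow_le_rpow (by positivity) h2n (hαpos m).le
      have hS3 : (∑ i ∈ Finset.range n, Y i a) ≤ (2*(n:ℝ)) ^ (α m) := hS2.trans h1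
      calc Real.log (∑ i ∈ Finset.range n, Y i a)
          ≤ Real.log ((2*(n:ℝ)) ^ (α m)) := Real.log_le_log (hSpos n hn1) hS3
        _ = α m * (Real.log n + Real.log 2) := by
            rw [Real.log_rpow (by positivity), Real.log_mul (by norm_num) (by positivity)]
            ring
  have hlogtend : Tendsto (fun n : ℕ => Real.log n) atTop atTop :=
    Real.tendsto_log_atTop.comp tendsto_natCast_atTop_atTop
  have hlogpos : ∀ᶠ n : ℕ in atTop, 0 < Real.log n := hlogtend.eventually_gt_atTop 0
  have hεtend : Tendsto ε atTop (nhds 0) := by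
    rw [hεdef]
    simp only [one_div]
    exact (tendsto_atTop_add_const_right atTop 2 tendsto_natCast_atTop_atTop).inv_tendsto_atTop
  have hβtend : Tendsto β atTop (nhds L) := by
    have h3 := ((tendsto_const_nhds (x := (1:ℝ)) (f := (atTop : Filter ℕ))).sub hεtend).div_const (θ-1)
    rw [hβdef, hLdef]
    simpa using h3
  have hαtend : Tendsto α atTop (nhds L) := by
    have h3 := ((tendsto_const_nhds (x := (1:ℝ)) (f := (atTop : Filter ℕ))).add hεtend).div_const (θ-1)
    rw [hαdef, hLdef]
    simpa using h3
  have hgtend : ∀ m, Tendsto (fun n : ℕ => β m * (Real.log n - Real.log 2) / Real.log n)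
      atTop (nhds (β m)) := by
    intro m
    have h0 : Tendsto (fun n : ℕ => Real.log 2 / Real.log n) atTop (nhds 0) :=
      tendsto_const_nhds.div_atTop hlogtend
    have h1 : Tendsto (fun n : ℕ => β m * (1 - Real.log 2 / Real.log n)) atTop
        (nhds (β m)) := by
      have h2 := (tendsto_const_nhds (x := β m) (f := (atTop : Filter ℕ))).mul
        ((tendsto_const_nhds (x := (1:ℝ)) (f := (atTop : Filter ℕ))).sub h0)
      simpa using h2
    refine h1.congr' ?_
    filter_upwards [hlogpos] with n hn
    field_simp
  have hhtend : ∀ m, Tendsto (fun n : ℕ => α m * (Real.log n + Real.log 2) / Real.log n)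
      atTop (nhds (α m)) := by
    intro m
    have h0 : Tendsto (fun n : ℕ => Real.log 2 / Real.log n) atTop (nhds 0) :=
      tendsto_const_nhds.div_atTop hlogtend
    have h1 : Tendsto (fun n : ℕ => α m * (1 + Real.log 2 / Real.log n)) atTop
        (nhds (α m)) := by
      have h2 := (tendsto_const_nhds (x := α m) (f := (atTop : Filter ℕ))).mul
        ((tendsto_const_nhds (x := (1:ℝ)) (f := (atTop : Filter ℕ))).add h0)
      simpa using h2
    refine h1.congr' ?_
    filter_upwards [hlogpos] with n hn
    field_simp
  rw [tendsto_order]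
  constructor
  · intro x hx
    obtain ⟨m, hm⟩ := (hβtend.eventually (Ioi_mem_nhds hx)).exists
    filter_upwards [hbd m, hlogpos, (hgtend m).eventually (Ioi_mem_nhds hm)] with n hn hpos hg
    refine lt_of_lt_of_le hg ?_
    exact (div_le_div_iff_of_pos_right hpos).2 hn.1
  · intro x hx
    obtain ⟨m, hm⟩ := (hαtend.eventually (Iio_mem_nhds hx)).exists
    filter_upwards [hbd m, hlogpos, (hhtend m).eventually (Iio_mem_nhds hm)] with n hn hpos hh
    refine lt_of_le_of_lt ?_ hh
    exact (div_le_div_iff_of_pos_right hpos).2 hn.2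
end

section
/- Let γ > 1, β > 1 and φ(ω) = (γ−1)ω^{−γ} on [1,∞). Then F⁻¹(1 − 1/n) = n^{1/(γ−1)} for every n ≥ 1, and the truncated integral is given exactly by ∫₁^{F⁻¹(1−1/n)} φ(ω)^{1−β} dω = [(γ−1)^{1−β}/(γ(β−1)+1)]·(n^{(γ(β−1)+1)/(γ−1)} − 1). In particular lim_{n→∞} ln(∫₁^{F⁻¹(1−1/n)} φ^{1−β}(ω)dω)/ln n = (γ/(γ−1))·(β − 1 + 1/γ) (Lemma 3 iii). -/
open MeasureTheory Filter intervalIntegral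

/-- **Lemma 3 iii.** For the exact power law `φ(ω) = (γ-1) ω^{-γ}` (`γ > 1`) and `β > 1`:
`F⁻¹(1 - 1/n) = n^{1/(γ-1)}` for all `n ≥ 1`, the truncated integral equals
`((γ-1)^{1-β}/(γ(β-1)+1)) (n^{(γ(β-1)+1)/(γ-1)} - 1)` exactly, and consequently
`log (∫₁^{F⁻¹(1-1/n)} φ^{1-β}) / log n → (γ/(γ-1)) (β - 1 + 1/γ)`. -/
theorem stmt_13
    (γ β : ℝ) (hγ : 1 < γ) (hβ : 1 < β)
    (φ : ℝ → ℝ)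
    (hφ : ∀ x : ℝ, 1 ≤ x → φ x = (γ - 1) * x ^ (-γ))
    (hφ_supp : ∀ x : ℝ, x < 1 → φ x = 0)
    (Finv : ℝ → ℝ)
    (hFinv_mem : ∀ u ∈ Set.Ico (0 : ℝ) 1, 1 ≤ Finv u)
    (hFinv : ∀ u ∈ Set.Ico (0 : ℝ) 1, (∫ t in (1 : ℝ)..(Finv u), φ t) = u) :
    (∀ n : ℕ, 1 ≤ n → Finv (1 - 1 / (n : ℝ)) = (n : ℝ) ^ (1 / (γ - 1)))
      ∧ (∀ n : ℕ, 1 ≤ n →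
          (∫ t in (1 : ℝ)..(Finv (1 - 1 / (n : ℝ))), φ t ^ (1 - β))
            = ((γ - 1) ^ (1 - β) / (γ * (β - 1) + 1))
                * ((n : ℝ) ^ ((γ * (β - 1) + 1) / (γ - 1)) - 1))
      ∧ Tendsto
          (fun n : ℕ =>
            Real.log (∫ t in (1 : ℝ)..(Finv (1 - 1 / (n : ℝ))), φ t ^ (1 - β))
              / Real.log n)
          atTop (nhds ((γ / (γ - 1)) * (β - 1 + 1 / γ))) := by
  have hγ1 : (0:ℝ) < γ - 1 := by linarith
  have hγ0 : (0:ℝ) < γ := by linarith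
  have hden : (0:ℝ) < γ * (β - 1) + 1 := by nlinarith
  set a : ℝ := (γ * (β - 1) + 1) / (γ - 1) with ha_def
  have ha0 : 0 < a := div_pos hden hγ1
  set C : ℝ := (γ - 1) ^ (1 - β) / (γ * (β - 1) + 1) with hC_def
  have hC : 0 < C := div_pos (Real.rpow_pos_of_pos hγ1 _) hden
  -- the cdf computation
  have hF : ∀ z : ℝ, 1 ≤ z → (∫ t in (1:ℝ)..z, φ t) = 1 - z ^ (1 - γ) := by
    intro z hz
    have hcongr : (∫ t in (1:ℝ)..z, φ t) = ∫ t in (1:ℝ)..z, (γ - 1) * t ^ (-γ) := by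
      apply intervalIntegral.integral_congr
      intro t ht
      rw [Set.uIcc_of_le hz] at ht
      exact hφ t ht.1
    rw [hcongr, intervalIntegral.integral_const_mul, integral_rpow]
    · rw [Real.one_rpow]
      have h1 : -γ + 1 = 1 - γ := by ring
      rw [h1]
      have h2 : (1:ℝ) - γ ≠ 0 := by intro h; linarith
      field_simp
      ring
    · right
      refine ⟨by intro h; linarith, ?_⟩
      rw [Set.uIcc_of_le hz]
      intro h
      linarith [h.1]
  -- part 1
  have part1 : ∀ n : ℕ, 1 ≤ n → Finv (1 - 1 / (n : ℝ)) = (n : ℝ) ^ (1 / (γ - 1)) := by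
    intro n hn
    have hn' : (1:ℝ) ≤ (n:ℝ) := by exact_mod_cast hn
    have hn0 : (0:ℝ) < (n:ℝ) := by linarith
    have hu : (1 - 1/(n:ℝ)) ∈ Set.Ico (0:ℝ) 1 := by
      constructor
      · have : 1/(n:ℝ) ≤ 1 := by rw [div_le_one hn0]; exact hn'
        linarith
      · have : 0 < 1/(n:ℝ) := by positivity
        linarith
    have h1 := hFinv _ hu
    have h2 := hFinv_mem _ hu
    rw [hF _ h2] at h1
    have h3 : Finv (1 - 1/(n:ℝ)) ^ (1 - γ) = 1/(n:ℝ) := by linarith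
    have hpos : (0:ℝ) < Finv (1 - 1/(n:ℝ)) := by linarith
    have hne : (1:ℝ) - γ ≠ 0 := by intro h; linarith
    have h4 : ((Finv (1 - 1/(n:ℝ))) ^ (1 - γ)) ^ ((1 - γ)⁻¹) = Finv (1 - 1/(n:ℝ)) :=
      Real.rpow_rpow_inv hpos.le hne
    rw [h3] at h4
    rw [← h4, one_div (n:ℝ), ← Real.rpow_neg_one (n:ℝ), ← Real.rpow_mul hn0.le]
    congr 1
    field_simp
    ring
  -- integral of φ^(1-β)
  have hI : ∀ z : ℝ, 1 ≤ z → (∫ t in (1:ℝ)..z, φ t ^ (1 - β))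
      = C * (z ^ (γ * (β - 1) + 1) - 1) := by
    intro z hz
    have hcongr : (∫ t in (1:ℝ)..z, φ t ^ (1 - β))
        = ∫ t in (1:ℝ)..z, (γ - 1) ^ (1 - β) * t ^ (γ * (β - 1)) := by
      apply intervalIntegral.integral_congr
      intro t ht
      rw [Set.uIcc_of_le hz] at ht
      have ht1 : 1 ≤ t := ht.1
      have ht0 : 0 < t := by linarith
      simp only []
      rw [hφ t ht1, Real.mul_rpow hγ1.le (Real.rpow_nonneg ht0.le _),
        ← Real.rpow_mul ht0.le]
      congr 2
      ring
    rw [hcongr, intervalIntegral.integral_const_mul,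
      integral_rpow (Or.inl (by nlinarith : (-1:ℝ) < γ * (β - 1)))]
    rw [Real.one_rpow, hC_def]
    ring
  -- part 2
  have hz1 : ∀ n : ℕ, 1 ≤ n → (1:ℝ) ≤ (n:ℝ) ^ (1 / (γ - 1)) := by
    intro n hn
    have hn' : (1:ℝ) ≤ (n:ℝ) := by exact_mod_cast hn
    calc (1:ℝ) = 1 ^ (1 / (γ - 1)) := (Real.one_rpow _).symm
    _ ≤ (n:ℝ) ^ (1 / (γ - 1)) := Real.rpow_le_rpow zero_le_one hn' (by positivity)
  have part2 : ∀ n : ℕ, 1 ≤ n →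
      (∫ t in (1:ℝ)..(Finv (1 - 1/(n:ℝ))), φ t ^ (1 - β)) = C * ((n:ℝ) ^ a - 1) := by
    intro n hn
    have hn0 : (0:ℝ) ≤ (n:ℝ) := by positivity
    rw [part1 n hn, hI _ (hz1 n hn)]
    congr 2
    rw [← Real.rpow_mul hn0]
    congr 1
    rw [ha_def]
    ring
  refine ⟨part1, fun n hn => by rw [part2 n hn, hC_def, ha_def], ?_⟩
  -- the limit
  have hL : (γ / (γ - 1)) * (β - 1 + 1 / γ) = a := by
    rw [ha_def]
    field_simp
  rw [hL]
  have hlog : Tendsto (fun n : ℕ => Real.log n) atTop atTop :=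
    Real.tendsto_log_atTop.comp tendsto_natCast_atTop_atTop
  have t1 : Tendsto (fun n : ℕ => Real.log C / Real.log n) atTop (nhds 0) :=
    tendsto_const_nhds.div_atTop hlog
  have t2 : Tendsto (fun n : ℕ => Real.log (1 - (n:ℝ) ^ (-a)) / Real.log n) atTop (nhds 0) := by
    have h1 : Tendsto (fun n : ℕ => 1 - (n:ℝ) ^ (-a)) atTop (nhds 1) := by
      have := (tendsto_rpow_neg_atTop ha0).comp tendsto_natCast_atTop_atTop
      simpa using tendsto_const_nhds.sub this
    have h2 : Tendsto (fun n : ℕ => Real.log (1 - (n:ℝ) ^ (-a))) atTop (nhds 0) := by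
      have := ((Real.continuousAt_log (by norm_num : (1:ℝ) ≠ 0)).tendsto).comp h1
      simpa [Function.comp_def] using this
    exact h2.div_atTop hlog
  have tmain : Tendsto
      (fun n : ℕ => Real.log C / Real.log n + a + Real.log (1 - (n:ℝ) ^ (-a)) / Real.log n)
      atTop (nhds (0 + a + 0)) := (t1.add tendsto_const_nhds).add t2
  rw [zero_add, add_zero] at tmain
  refine tmain.congr' ?_
  filter_upwards [eventually_ge_atTop 2] with n hn
  have hn1 : 1 ≤ n := by omega
  have hn' : (2:ℝ) ≤ (n:ℝ) := by exact_mod_cast hn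
  have hn0 : (0:ℝ) < (n:ℝ) := by linarith
  have hlogn : 0 < Real.log n := Real.log_pos (by linarith)
  have hna : 1 < (n:ℝ) ^ a := by
    rw [Real.one_lt_rpow_iff_of_pos hn0]
    exact Or.inl ⟨by linarith, ha0⟩
  have hinv : (n:ℝ) ^ (-a) < 1 := by
    rw [Real.rpow_neg hn0.le]
    exact inv_lt_one_of_one_lt₀ hna
  have hfac : (n:ℝ) ^ a - 1 = (n:ℝ) ^ a * (1 - (n:ℝ) ^ (-a)) := by
    have : (n:ℝ) ^ a * (n:ℝ) ^ (-a) = 1 := by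
      rw [← Real.rpow_add hn0]; simp
    nlinarith [this]
  have hpos1 : 0 < (n:ℝ) ^ a - 1 := by linarith
  rw [part2 n hn1, Real.log_mul (ne_of_gt hC) (ne_of_gt hpos1), hfac,
    Real.log_mul (by positivity) (by linarith), Real.log_rpow hn0]
  field_simp
  ring
end

section
/- Let A > 0 and A₂ > 0, set z := A₂/A², and define S(k) := A^k·(f_X(k,z) + f_Y(k,z)) for k ≥ 1, where f_X, f_Y are given by the recursion f_X(1,z)=1+z, f_Y(1,z)=2, f_X(k+1,z)=f_X(k,z)+z f_Y(k,z), f_Y(k+1,z)=f_X(k,z)+f_Y(k,z). Then there is a constant C > 0 such that lim_{k→∞} S(k)/(A+√A₂)^k = C; in particular lim_{k→∞} S(k)^{1/k} = A + √A₂. -/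
open Filter

/-- For `A, A₂ > 0` and `z = A₂ / A²`, the quantity
`S(k) = A^k (f_X(k,z) + f_Y(k,z)) = ∑_m C_m^{(k)} A₂^m A^{k-2m}` (with `f_X, f_Y` defined
by the Markov-chain recursion) satisfies `S(k) / (A + √A₂)^k → C` for some constant
`C > 0`; in particular `S(k)^{1/k} → A + √A₂`. -/
theorem stmt_15
    (A A₂ : ℝ) (hA : 0 < A) (hA₂ : 0 < A₂)
    (z : ℝ) (hz : z = A₂ / A ^ 2)
    (fX fY : ℕ → ℝ)
    (hX1 : fX 1 = 1 + z) (hY1 : fY 1 = 2)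
    (hrec : ∀ k : ℕ, 1 ≤ k →
      fX (k + 1) = fX k + z * fY k ∧ fY (k + 1) = fX k + fY k)
    (S : ℕ → ℝ) (hS : ∀ k, S k = A ^ k * (fX k + fY k)) :
    (∃ C : ℝ, 0 < C ∧
        Tendsto (fun k : ℕ => S k / (A + Real.sqrt A₂) ^ k) atTop (nhds C))
      ∧ Tendsto (fun k : ℕ => S k ^ ((k : ℝ)⁻¹)) atTop
          (nhds (A + Real.sqrt A₂)) := by
  set w : ℝ := Real.sqrt A₂ / A with hwdef
  have hsq : 0 < Real.sqrt A₂ := Real.sqrt_pos.mpr hA₂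
  have hw : 0 < w := div_pos hsq hA
  have hw2 : w ^ 2 = z := by
    rw [hz, hwdef, div_pow, Real.sq_sqrt hA₂.le]
  set L : ℝ := A + Real.sqrt A₂ with hLdef
  set M : ℝ := A - Real.sqrt A₂ with hMdef
  have hL : L = A * (1 + w) := by
    rw [hLdef, hwdef, mul_add, mul_one, mul_div_assoc', mul_comm A, mul_div_assoc,
      div_self hA.ne', mul_one]
  have hM : M = A * (1 - w) := by
    rw [hMdef, hwdef, mul_sub, mul_one, mul_div_assoc', mul_comm A, mul_div_assoc,
      div_self hA.ne', mul_one]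
  have hLpos : 0 < L := by positivity
  -- closed forms for fX, fY
  have key : ∀ k : ℕ, 1 ≤ k →
      fX k = ((1 + w) ^ (k + 1) + (1 - w) ^ (k + 1)) / 2 ∧
      fY k = ((1 + w) ^ (k + 1) - (1 - w) ^ (k + 1)) / (2 * w) := by
    intro k hk
    induction k, hk using Nat.le_induction with
    | base =>
      constructor
      · rw [hX1, ← hw2]; ring
      · rw [hY1]; field_simp; ring
    | succ k hk ih =>
      obtain ⟨hXk, hYk⟩ := ih
      obtain ⟨hX', hY'⟩ := hrec k hk
      constructor
      · rw [hX', hXk, hYk, ← hw2]; field_simp; ring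
      · rw [hY', hXk, hYk]; field_simp; ring
  -- closed form for S
  have hSkey : ∀ k : ℕ, 1 ≤ k →
      S k = ((1 + w) ^ 2 * L ^ k - (1 - w) ^ 2 * M ^ k) / (2 * w) := by
    intro k hk
    obtain ⟨hXk, hYk⟩ := key k hk
    rw [hS, hXk, hYk, hL, hM, mul_pow, mul_pow, pow_succ]
    field_simp
    ring
  have hC : (0:ℝ) < (1 + w) ^ 2 / (2 * w) := by positivity
  have hr : |M / L| < 1 := by
    rw [abs_div, abs_of_pos hLpos, div_lt_one hLpos, hLdef, hMdef, abs_sub_lt_iff]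
    constructor <;> linarith
  -- the ratio S k / L^k
  have hratio : ∀ᶠ k : ℕ in atTop,
      ((1 + w) ^ 2 - (1 - w) ^ 2 * (M / L) ^ k) / (2 * w) = S k / L ^ k := by
    filter_upwards [eventually_ge_atTop 1] with k hk
    rw [hSkey k hk, div_pow]
    have hLk : (L : ℝ) ^ k ≠ 0 := by positivity
    have hw' : w ≠ 0 := hw.ne'
    clear_value w L M
    field_simp
  have htend : Tendsto (fun k : ℕ => S k / L ^ k) atTop
      (nhds ((1 + w) ^ 2 / (2 * w))) := by
    have h0 : Tendsto (fun k : ℕ => (M / L) ^ k) atTop (nhds 0) :=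
      tendsto_pow_atTop_nhds_zero_of_abs_lt_one hr
    have : Tendsto (fun k : ℕ =>
        ((1 + w) ^ 2 - (1 - w) ^ 2 * (M / L) ^ k) / (2 * w)) atTop
        (nhds (((1 + w) ^ 2 - (1 - w) ^ 2 * 0) / (2 * w))) := by
      exact (((tendsto_const_nhds.sub ((tendsto_const_nhds.mul h0)))).div_const _)
    rw [mul_zero, sub_zero] at this
    exact this.congr' hratio
  refine ⟨⟨(1 + w) ^ 2 / (2 * w), hC, htend⟩, ?_⟩
  -- second part
  set C := (1 + w) ^ 2 / (2 * w) with hCdef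
  have hpos : ∀ᶠ k : ℕ in atTop, 0 < S k / L ^ k :=
    htend.eventually (eventually_gt_nhds hC)
  have hinv : Tendsto (fun k : ℕ => ((k : ℝ))⁻¹) atTop (nhds 0) :=
    tendsto_inv_atTop_zero.comp tendsto_natCast_atTop_atTop
  have h1 : Tendsto (fun k : ℕ => (S k / L ^ k) ^ ((k : ℝ)⁻¹)) atTop
      (nhds (C ^ (0:ℝ))) :=
    htend.rpow hinv (Or.inl hC.ne')
  rw [Real.rpow_zero] at h1
  have h2 : Tendsto (fun k : ℕ => (S k / L ^ k) ^ ((k : ℝ)⁻¹) * L) atTop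
      (nhds (1 * L)) := h1.mul_const L
  rw [one_mul] at h2
  refine h2.congr' ?_
  filter_upwards [eventually_ge_atTop 1, hpos] with k hk hkpos
  have hk0 : (k : ℝ) ≠ 0 := Nat.cast_ne_zero.mpr (by omega)
  have hLk : (0:ℝ) < L ^ k := by positivity
  have hstep : (S k / L ^ k) ^ ((k : ℝ)⁻¹) * L
      = ((S k / L ^ k) * L ^ k) ^ ((k : ℝ)⁻¹) := by
    rw [Real.mul_rpow hkpos.le hLk.le, ← Real.rpow_natCast L k,
      ← Real.rpow_mul hLpos.le, mul_inv_cancel₀ hk0, Real.rpow_one]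
  rw [hstep, div_mul_cancel₀ _ hLk.ne']
end
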